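/- arXiv:0911.4677 — 9 statements merged into one kernel-verified Lean document; each statement's English description precedes it below -/
import Mathlib

section
/- Let V be a linear subspace of ℝ^n such that V intersects the nonnegative orthant {x : x_i ≥ 0 for all i} only in 0. Then there exists a vector y in the orthogonal complement of V all of whose coordinates are strictly positive. -/
open RealInnerProductSpace

/-- If a linear subspace `V` of `ℝⁿ` meets the nonnegative orthant only in `0`,
then there is a vector in `Vᗮ` with all coordinates strictly positive. -/
theorem subspace_meets_orthant_trivially_exists_positive_orthogonal
    (n : ℕ) (V : Submodule ℝ (EuclideanSpace ℝ (Fin n)))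
    (hV : ∀ x ∈ V, (∀ i, 0 ≤ x i) → x = 0) :
    ∃ y ∈ Vᗮ, ∀ i, 0 < y i := by
  classical
  set e := EuclideanSpace.equiv (Fin n) ℝ with he
  set S : Set (EuclideanSpace ℝ (Fin n)) := e.symm '' stdSimplex ℝ (Fin n) with hS
  have hSconv : Convex ℝ S :=
    (convex_stdSimplex ℝ (Fin n)).linear_image (e.symm : (Fin n → ℝ) →ₗ[ℝ] EuclideanSpace ℝ (Fin n))
  have hScomp : IsCompact S :=
    (isCompact_stdSimplex ℝ (Fin n)).image (e.symm : (Fin n → ℝ) →L[ℝ] EuclideanSpace ℝ (Fin n)).continuous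
  have hSmem : ∀ x ∈ S, (∀ i, 0 ≤ x i) ∧ ∑ i, x i = 1 := by
    rintro x ⟨f, ⟨hnn, hsum⟩, rfl⟩
    exact ⟨hnn, hsum⟩
  have hdisj : Disjoint (V : Set (EuclideanSpace ℝ (Fin n))) S := by
    rw [Set.disjoint_left]
    intro x hxV hxS
    obtain ⟨hnn, hsum⟩ := hSmem x hxS
    have := hV x hxV hnn
    rw [this] at hsum
    simp at hsum
  obtain ⟨f, u, v, hfu, huv, hfv⟩ :=
    geometric_hahn_banach_closed_compact V.convex
      (Submodule.closed_of_finiteDimensional V) hSconv hScomp hdisj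
  -- f vanishes on V
  have hf0 : ∀ a ∈ V, f a = 0 := by
    intro a ha
    by_contra h
    have hmem : (((u + 1) / f a) • a) ∈ V := V.smul_mem _ ha
    have h2 := hfu _ hmem
    rw [map_smul, smul_eq_mul] at h2
    have h3 : (u + 1) / f a * f a = u + 1 := div_mul_cancel₀ _ h
    linarith
  have hu0 : 0 < u := by
    have := hfu 0 V.zero_mem
    simpa using this
  set y : EuclideanSpace ℝ (Fin n) := (InnerProductSpace.toDual ℝ _).symm f with hy
  have hyx : ∀ x, ⟪y, x⟫ = f x := fun x => InnerProductSpace.toDual_symm_apply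
  refine ⟨y, ?_, ?_⟩
  · rw [Submodule.mem_orthogonal]
    intro a ha
    rw [real_inner_comm, hyx]
    exact hf0 a ha
  · intro i
    have hsingle : EuclideanSpace.single i (1:ℝ) ∈ S := by
      refine ⟨Pi.single i 1, ⟨?_, ?_⟩, rfl⟩
      · intro j
        by_cases h : j = i <;> simp [Pi.single_apply, h]
      · simp [Pi.single_apply]
    have h1 := hfv _ hsingle
    rw [← hyx] at h1
    rw [real_inner_comm, EuclideanSpace.inner_single_left] at h1
    simpa using lt_trans (lt_trans hu0 huv) h1
end

section
/- Let P_1, ..., P_k be k ≥ n+2 points in ℝ^n whose nonnegative span is all of ℝ^n (equivalently, 0 lies in the interior of their convex hull and they span ℝ^n), and such that no n of the P_i are contained in an (n-1)-dimensional subspace. Then there exist n+1 points among the P_i whose nonnegative span is also all of ℝ^n. -/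
open Finset

section Aux

variable {n k : ℕ} {P : Fin k → (Fin n → ℝ)}

/-- Any nontrivial linear relation among the `P i` has support of size at least `n+1`,
when every `n` of the points are linearly independent. -/
lemma aux_supp_lb (hk : n ≤ k)
    (hindep : ∀ s : Finset (Fin k), s.card = n →
      LinearIndependent ℝ (fun i : s => P i))
    (d : Fin k → ℝ) (hrel : ∑ i, d i • P i = 0) (hd : ∃ i, d i ≠ 0) :
    n + 1 ≤ (univ.filter fun i => d i ≠ 0).card := by
  classical
  by_contra h
  push_neg at h
  have hcard : (univ.filter fun i => d i ≠ 0).card ≤ n := by omega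
  obtain ⟨s', hsub, -, hs'⟩ :=
    Finset.exists_subsuperset_card_eq
      (Finset.subset_univ (univ.filter fun i => d i ≠ 0)) hcard
      (by simpa using hk)
  have hzero : ∀ i, i ∉ s' → d i = 0 := by
    intro i hi
    by_contra hdi
    exact hi (hsub (by simp [hdi]))
  have hsum : ∑ i : s', d (i : Fin k) • P (i : Fin k) = 0 := by
    rw [Finset.sum_coe_sort s' (fun i => d i • P i),
      Finset.sum_subset (Finset.subset_univ s')
        (fun i _ hi => by rw [hzero i hi, zero_smul])]
    exact hrel
  have hli := hindep s' hs'
  rw [Fintype.linearIndependent_iff] at hli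
  have hzero' := hli (fun i => d i) hsum
  obtain ⟨i, hi⟩ := hd
  by_cases hmem : i ∈ s'
  · exact hi (hzero' ⟨i, hmem⟩)
  · exact hi (hzero i hmem)

/-- Carathéodory-style reduction: a nonnegative nontrivial relation can be reduced
to one whose support has exactly `n+1` elements. -/
lemma aux_reduce (hk : n + 1 ≤ k)
    (hindep : ∀ s : Finset (Fin k), s.card = n →
      LinearIndependent ℝ (fun i : s => P i)) :
    ∀ m (d : Fin k → ℝ), (univ.filter fun i => d i ≠ 0).card ≤ m →
      (∀ i, 0 ≤ d i) → (∃ i, d i ≠ 0) → ∑ i, d i • P i = 0 →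
      ∃ e : Fin k → ℝ, (∀ i, 0 ≤ e i) ∧ ∑ i, e i • P i = 0 ∧
        (univ.filter fun i => e i ≠ 0).card = n + 1 := by
  classical
  intro m
  induction m with
  | zero =>
    intro d hcard hd0 hdne hrel
    exfalso
    obtain ⟨i, hi⟩ := hdne
    have : i ∈ univ.filter fun i => d i ≠ 0 := by simp [hi]
    have := Finset.card_pos.2 ⟨i, this⟩
    omega
  | succ m ih =>
    intro d hcard hd0 hdne hrel
    have hlb := aux_supp_lb (by omega) hindep d hrel hdne
    rcases eq_or_lt_of_le hlb with heq | hlt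
    · exact ⟨d, hd0, hrel, heq.symm⟩
    -- the support S has more than n+1 elements
    set S : Finset (Fin k) := univ.filter fun i => d i ≠ 0 with hS
    obtain ⟨T, hTS, hT⟩ := Finset.exists_subset_card_eq (show n + 1 ≤ S.card by omega)
    -- the n+1 points indexed by T are linearly dependent
    have hdep : ¬ LinearIndependent ℝ (fun i : T => P i) := by
      intro h
      have hle := h.fintype_card_le_finrank
      rw [Module.finrank_fin_fun ℝ] at hle
      simp [hT] at hle
    rw [Fintype.not_linearIndependent_iff] at hdep
    obtain ⟨g₀, hg₀rel, i₀, hi₀⟩ := hdep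
    set g : Fin k → ℝ := fun i => if h : i ∈ T then g₀ ⟨i, h⟩ else 0 with hg
    have hgsupp : ∀ i, g i ≠ 0 → i ∈ T := by
      intro i hi
      by_contra hmem
      exact hi (by simp [hg, hmem])
    have hgrel : ∑ i, g i • P i = 0 := by
      rw [← Finset.sum_subset (Finset.subset_univ T)
        (fun i _ hi => by simp [hg, hi])]
      rw [← Finset.sum_coe_sort T (fun i => g i • P i)]
      rw [← hg₀rel]
      apply Finset.sum_congr rfl
      intro i _
      simp [hg, i.2]
    have hgne : g (i₀ : Fin k) ≠ 0 := by
      simpa [hg, i₀.2] using hi₀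
    -- key step: given a relation `g` supported in `T` with a positive coefficient,
    -- we can decrease the support of `d`
    have key : ∀ g : Fin k → ℝ, (∑ i, g i • P i = 0) →
        (∀ i, g i ≠ 0 → i ∈ T) → (∃ i, 0 < g i) →
        ∃ e : Fin k → ℝ, (∀ i, 0 ≤ e i) ∧ ∑ i, e i • P i = 0 ∧
          (univ.filter fun i => e i ≠ 0).card = n + 1 := by
      intro g hgrel hgsupp hgpos
      set A : Finset (Fin k) := univ.filter fun i => 0 < g i with hA
      have hAne : A.Nonempty := by
        obtain ⟨i, hi⟩ := hgpos
        exact ⟨i, by simp [hA, hi]⟩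
      have hdposA : ∀ i ∈ A, 0 < d i := by
        intro i hi
        have hgi : 0 < g i := by simpa [hA] using hi
        have hiS : i ∈ S := hTS (hgsupp i (ne_of_gt hgi))
        have : d i ≠ 0 := by simpa [hS] using hiS
        exact lt_of_le_of_ne (hd0 i) (Ne.symm this)
      set t : ℝ := A.inf' hAne (fun i => d i / g i) with htdef
      have ht : 0 < t := by
        rw [htdef, Finset.lt_inf'_iff]
        intro i hi
        have hgi : 0 < g i := by simpa [hA] using hi
        exact div_pos (hdposA i hi) hgi
      set d' : Fin k → ℝ := fun i => d i - t * g i with hd'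
      have hd'0 : ∀ i, 0 ≤ d' i := by
        intro i
        rcases le_or_gt (g i) 0 with hgi | hgi
        · have : t * g i ≤ 0 := mul_nonpos_of_nonneg_of_nonpos ht.le hgi
          simp only [hd']
          linarith [hd0 i]
        · have hiA : i ∈ A := by simp [hA, hgi]
          have hle : t ≤ d i / g i := Finset.inf'_le _ hiA
          have : t * g i ≤ d i := by
            rw [← le_div_iff₀ hgi]; exact hle
          simp only [hd']
          linarith
      have hd'rel : ∑ i, d' i • P i = 0 := by
        simp only [hd', sub_smul, Finset.sum_sub_distrib, hrel, mul_smul]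
        rw [← Finset.smul_sum, hgrel, smul_zero, sub_zero]
      -- d' is nontrivial: pick j in S \ T
      have hjex : (S \ T).Nonempty := by
        rw [← Finset.card_pos, Finset.card_sdiff_of_subset hTS]
        omega
      obtain ⟨j, hj⟩ := hjex
      rw [Finset.mem_sdiff] at hj
      have hgj : g j = 0 := by
        by_contra hgj
        exact hj.2 (hgsupp j hgj)
      have hd'j : d' j ≠ 0 := by
        have : d j ≠ 0 := by simpa [hS] using hj.1
        simp [hd', hgj, this]
      -- support of d' is strictly smaller
      obtain ⟨i₁, hi₁A, hi₁⟩ := Finset.exists_mem_eq_inf' hAne (fun i => d i / g i)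
      have hgi₁ : 0 < g i₁ := by simpa [hA] using hi₁A
      have hd'i₁ : d' i₁ = 0 := by
        show d i₁ - t * g i₁ = 0
        rw [htdef, hi₁, div_mul_cancel₀ _ (ne_of_gt hgi₁), sub_self]
      have hi₁S : i₁ ∈ S := hTS (hgsupp i₁ (ne_of_gt hgi₁))
      have hsubset : (univ.filter fun i => d' i ≠ 0) ⊆ S.erase i₁ := by
        intro i hi
        have hd'i : d' i ≠ 0 := by simpa using hi
        rw [Finset.mem_erase]
        constructor
        · rintro rfl; exact hd'i hd'i₁
        · by_contra hiS
          have hdi : d i = 0 := by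
            by_contra hdi
            exact hiS (by simp [hS, hdi])
          have hgi : g i = 0 := by
            by_contra hgi
            exact hiS (hTS (hgsupp i hgi))
          exact hd'i (by simp [hd', hdi, hgi])
      have hcard' : (univ.filter fun i => d' i ≠ 0).card ≤ m := by
        have h1 := Finset.card_le_card hsubset
        have h2 : (S.erase i₁).card = S.card - 1 := Finset.card_erase_of_mem hi₁S
        omega
      exact ih d' hcard' hd'0 ⟨j, hd'j⟩ hd'rel
    -- apply the key step to g or -g
    rcases lt_or_gt_of_ne hgne with hneg | hpos
    · refine key (fun i => -g i) ?_ ?_ ⟨i₀, by simpa using hneg⟩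
      · simp only [neg_smul, Finset.sum_neg_distrib, hgrel, neg_zero]
      · intro i hi
        exact hgsupp i (by simpa using hi)
    · exact key g hgrel hgsupp ⟨i₀, hpos⟩

end Aux

/-- If `k ≥ n+2` points in `ℝⁿ` have nonnegative span all of `ℝⁿ`, and no `n` of
them lie in an `(n-1)`-dimensional subspace (i.e. every `n` of them are linearly
independent), then some `n+1` of them already have nonnegative span all of `ℝⁿ`. -/
theorem exists_spanning_subset_of_pos_span
    (n k : ℕ) (hk : n + 2 ≤ k) (P : Fin k → (Fin n → ℝ))
    (hspan : ∀ v : Fin n → ℝ, ∃ c : Fin k → ℝ,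
      (∀ i, 0 ≤ c i) ∧ v = ∑ i, c i • P i)
    (hindep : ∀ s : Finset (Fin k), s.card = n →
      LinearIndependent ℝ (fun i : s => P i)) :
    ∃ s : Finset (Fin k), s.card = n + 1 ∧
      ∀ v : Fin n → ℝ, ∃ c : Fin k → ℝ,
        (∀ i, 0 ≤ c i) ∧ v = ∑ i ∈ s, c i • P i := by
  classical
  -- Step 1: a strictly positive relation among all the points
  obtain ⟨c₀, hc₀, hc₀sum⟩ := hspan (-(∑ i, P i))
  set d : Fin k → ℝ := fun i => c₀ i + 1 with hd
  have hd0 : ∀ i, 0 ≤ d i := fun i => by simp only [hd]; linarith [hc₀ i]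
  have hdrel : ∑ i, d i • P i = 0 := by
    simp only [hd, add_smul, one_smul, Finset.sum_add_distrib, ← hc₀sum]
    simp
  have hk0 : 0 < k := by omega
  have hdne : ∃ i, d i ≠ 0 := by
    refine ⟨⟨0, hk0⟩, ?_⟩
    simp only [hd]
    linarith [hc₀ ⟨0, hk0⟩]
  -- Step 2: reduce the support to exactly n+1 points
  obtain ⟨e, he0, herel, hecard⟩ :=
    aux_reduce (by omega) hindep k d (le_trans (Finset.card_le_card (Finset.subset_univ _)) (by simp)) hd0 hdne hdrel
  set s : Finset (Fin k) := univ.filter fun i => e i ≠ 0 with hs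
  have hse : ∀ i, i ∉ s → e i = 0 := by
    intro i hi
    by_contra hei
    exact hi (by simp [hs, hei])
  have hepos : ∀ i ∈ s, 0 < e i := by
    intro i hi
    have : e i ≠ 0 := by simpa [hs] using hi
    exact lt_of_le_of_ne (he0 i) (Ne.symm this)
  refine ⟨s, hecard, ?_⟩
  -- Step 3: s minus one point is a basis
  have hsne : s.Nonempty := Finset.card_pos.1 (by omega)
  obtain ⟨i₁, hi₁⟩ := hsne
  set s₀ : Finset (Fin k) := s.erase i₁ with hs₀
  have hs₀card : s₀.card = n := by
    rw [hs₀, Finset.card_erase_of_mem hi₁, hecard]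
    omega
  have hli := hindep s₀ hs₀card
  have hspan₀ : Submodule.span ℝ (Set.range fun i : s₀ => P i) = ⊤ := by
    apply hli.span_eq_top_of_card_eq_finrank'
    rw [Module.finrank_fin_fun ℝ]
    simp [hs₀card]
  intro v
  have hvmem : v ∈ Submodule.span ℝ (Set.range fun i : s₀ => P i) := by
    rw [hspan₀]; trivial
  rw [Submodule.mem_span_range_iff_exists_fun] at hvmem
  obtain ⟨a₀, ha₀⟩ := hvmem
  set a : Fin k → ℝ := fun i => if h : i ∈ s₀ then a₀ ⟨i, h⟩ else 0 with ha
  have hasum : ∑ i ∈ s, a i • P i = v := by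
    have h1 : ∑ i ∈ s₀, a i • P i = ∑ i ∈ s, a i • P i :=
      Finset.sum_subset (by rw [hs₀]; exact Finset.erase_subset i₁ s)
        (fun i _ hi => by simp [ha, hi])
    have h2 : ∑ i ∈ s₀, a i • P i = ∑ i : s₀, a₀ i • P (i : Fin k) := by
      rw [← Finset.sum_coe_sort s₀ (fun i => a i • P i)]
      exact Finset.sum_congr rfl (fun i _ => by simp [ha, i.2])
    rw [← h1, h2, ha₀]
  have hesum : ∑ i ∈ s, e i • P i = 0 := by
    rw [Finset.sum_subset (Finset.subset_univ s)
      (fun i _ hi => by rw [hse i hi, zero_smul])]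
    exact herel
  have hsne' : s.Nonempty := ⟨i₁, hi₁⟩
  set t : ℝ := s.sup' hsne' (fun i => -a i / e i) with htdef
  refine ⟨fun i => if i ∈ s then a i + t * e i else 0, ?_, ?_⟩
  · intro i
    by_cases hi : i ∈ s
    · simp only [if_pos hi]
      have hei := hepos i hi
      have hle : -a i / e i ≤ t := by
        rw [htdef]; exact Finset.le_sup' (fun j => -a j / e j) hi
      rw [div_le_iff₀ hei] at hle
      linarith
    · simp [hi]
  · have : ∑ i ∈ s, (if i ∈ s then a i + t * e i else 0) • P i
        = ∑ i ∈ s, (a i + t * e i) • P i := by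
      apply Finset.sum_congr rfl
      intro i hi
      rw [if_pos hi]
    rw [this]
    simp only [add_smul, Finset.sum_add_distrib, hasum, mul_smul]
    rw [← Finset.smul_sum, hesum, smul_zero, add_zero]
end

section
/- Let (r_1, ..., r_g) be a basis of a totally real number field F of degree g over ℚ, with dual basis (s_1, ..., s_g) with respect to the trace pairing (i.e. Tr(r_i s_j) = δ_{ij}). If the basis is rational and weakly positive — meaning (r_i/s_i)/(r_j/s_j) ∈ ℚ and is totally positive for all i ≠ j — then it is positive, i.e. r_i/s_i is totally positive for all i. -/
open Module

/-- A rational and weakly positive basis of a totally real number field is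
positive: if `(rᵢ)` is a `ℚ`-basis of `F` with trace-dual basis `(sᵢ)` such that
`(rᵢ/sᵢ)/(rⱼ/sⱼ)` is rational and totally positive for all `i ≠ j`, then each
`rᵢ/sᵢ` is totally positive. -/
theorem weakly_positive_rational_basis_is_positive
    (F : Type*) [Field F] [Algebra ℚ F] [FiniteDimensional ℚ F] (g : ℕ)
    (hdeg : Module.finrank ℚ F = g)
    (htotreal : ∀ φ : F →+* ℂ, ∀ x : F, (φ x).im = 0)
    (b : Basis (Fin g) ℚ F) (r s : Fin g → F) (hr : ∀ i, r i = b i)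
    (hdual : ∀ i j, Algebra.trace ℚ F (r i * s j) = if i = j then 1 else 0)
    (hrat : ∀ i j, i ≠ j → ∃ q : ℚ, (r i / s i) / (r j / s j) = algebraMap ℚ F q)
    (hweakpos : ∀ i j, i ≠ j → ∀ φ : F →+* ℂ,
      0 < (φ ((r i / s i) / (r j / s j))).re) :
    ∀ i, ∀ φ : F →+* ℂ, 0 < (φ (r i / s i)).re := by
  classical
  intro i φ₀
  by_contra hng
  push_neg at hng
  have hs : ∀ j, s j ≠ 0 := by
    intro j hj
    have h := hdual j j
    rw [hj, mul_zero] at h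
    simp at h
  have hrne : ∀ j, r j ≠ 0 := by
    intro j hj
    have h := hdual j j
    rw [hj, zero_mul] at h
    simp at h
  set t : F := r i / s i with hts
  have htne : t ≠ 0 := div_ne_zero (hrne i) (hs i)
  -- each ratio r j / s j is a positive rational multiple of t
  have hc : ∀ j, ∃ q : ℚ, 0 < q ∧ r j / s j = algebraMap ℚ F q * t := by
    intro j
    by_cases hji : j = i
    · subst hji; exact ⟨1, one_pos, by simp [hts]⟩
    · obtain ⟨q, hq⟩ := hrat j i hji
      have hpos := hweakpos j i hji φ₀
      rw [hq] at hpos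
      have hre : (φ₀ (algebraMap ℚ F q)).re = (q : ℝ) := by
        rw [eq_ratCast (algebraMap ℚ F) q, map_ratCast]
        simp
      rw [hre] at hpos
      have hq' : r j / s j = algebraMap ℚ F q * t := by
        rw [← hq, div_mul_cancel₀ _ htne]
      exact ⟨q, by exact_mod_cast hpos, hq'⟩
  choose c hcpos hcspec using hc
  have hcne : ∀ j, (c j : ℚ) ≠ 0 := fun j => ne_of_gt (hcpos j)
  -- trace identity : Tr (t * s j * s k) = δ_{jk} / c j
  have hTr : ∀ j k, Algebra.trace ℚ F (t * (s j * s k))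
      = (c j)⁻¹ * (if j = k then 1 else 0) := by
    intro j k
    have h2 : r j = algebraMap ℚ F (c j) * t * s j := by
      rw [← hcspec j, div_mul_cancel₀ _ (hs j)]
    have h1 : (c j)⁻¹ • r j = t * s j := by
      rw [h2, ← Algebra.smul_def, smul_mul_assoc, inv_smul_smul₀ (hcne j)]
    calc Algebra.trace ℚ F (t * (s j * s k))
        = Algebra.trace ℚ F ((c j)⁻¹ • (r j * s k)) := by
          congr 1
          rw [← smul_mul_assoc, h1]
          exact (mul_assoc t (s j) (s k)).symm
      _ = (c j)⁻¹ * (if j = k then 1 else 0) := by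
          rw [map_smul, hdual j k, smul_eq_mul]
  -- embeddings
  have hembed : ∀ y : F, algebraMap ℚ ℂ (Algebra.trace ℚ F y) = ∑ σ : F →ₐ[ℚ] ℂ, σ y :=
    fun y => trace_eq_sum_embeddings ℂ
  have him : ∀ (σ : F →ₐ[ℚ] ℂ) (y : F), (σ y).im = 0 := fun σ y => htotreal σ.toRingHom y
  have hmulre : ∀ (σ : F →ₐ[ℚ] ℂ) (y z : F), (σ (y * z)).re = (σ y).re * (σ z).re := by
    intro σ y z
    rw [map_mul, Complex.mul_re, him σ y, him σ z, mul_zero, sub_zero]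
  -- the quadratic form
  set f : (Fin g → ℝ) → ℝ :=
    fun w => ∑ σ : F →ₐ[ℚ] ℂ, (σ t).re * (∑ j, w j * (σ (s j)).re) ^ 2 with hf
  have key : ∀ a : Fin g → ℚ,
      f (fun j => (a j : ℝ)) = ∑ j, (a j : ℝ) ^ 2 * ((c j : ℝ))⁻¹ := by
    intro a
    set x : F := ∑ j, algebraMap ℚ F (a j) * s j with hx
    have hσx : ∀ σ : F →ₐ[ℚ] ℂ, (σ x).re = ∑ j, (a j : ℝ) * (σ (s j)).re := by
      intro σ
      rw [hx, map_sum, Complex.re_sum]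
      refine Finset.sum_congr rfl fun j _ => ?_
      rw [map_mul, AlgHom.commutes, Complex.mul_re]
      have h1 : algebraMap ℚ ℂ (a j) = ((a j : ℝ) : ℂ) := by
        rw [eq_ratCast (algebraMap ℚ ℂ) (a j)]
        push_cast
        rfl
      rw [h1, Complex.ofReal_re, Complex.ofReal_im, zero_mul, sub_zero]
    have htrace : Algebra.trace ℚ F (t * (x * x)) = ∑ j, (a j) ^ 2 * (c j)⁻¹ := by
      have hxx : t * (x * x) = ∑ j, ∑ k, (a j * a k) • (t * (s j * s k)) := by
        rw [hx, Finset.sum_mul_sum, Finset.mul_sum]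
        refine Finset.sum_congr rfl fun j _ => ?_
        rw [Finset.mul_sum]
        refine Finset.sum_congr rfl fun k _ => ?_
        rw [Algebra.smul_def, map_mul]
        ring
      rw [hxx, map_sum]
      refine Finset.sum_congr rfl fun j _ => ?_
      rw [map_sum]
      have h3 : ∀ k, Algebra.trace ℚ F ((a j * a k) • (t * (s j * s k)))
          = (a j * a k) * ((c j)⁻¹ * (if j = k then 1 else 0)) := by
        intro k
        rw [map_smul, hTr j k, smul_eq_mul]
      rw [Finset.sum_congr rfl fun k _ => h3 k]
      have h5 : ∀ k, a j * a k * ((c j)⁻¹ * if j = k then 1 else 0)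
          = if j = k then a j ^ 2 * (c j)⁻¹ else 0 := by
        intro k
        by_cases hjk : j = k
        · subst hjk
          rw [if_pos rfl, if_pos rfl]
          ring
        · rw [if_neg hjk, if_neg hjk, mul_zero, mul_zero]
      rw [Finset.sum_congr rfl fun k _ => h5 k, Finset.sum_ite_eq Finset.univ j
        (fun _ => a j ^ 2 * (c j)⁻¹), if_pos (Finset.mem_univ j)]
    have h2 := congrArg Complex.re (hembed (t * (x * x)))
    rw [htrace, eq_ratCast (algebraMap ℚ ℂ)] at h2
    rw [Complex.re_sum] at h2
    have h4 : ∀ σ : F →ₐ[ℚ] ℂ, (σ (t * (x * x))).re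
        = (σ t).re * (∑ j, (a j : ℝ) * (σ (s j)).re) ^ 2 := by
      intro σ
      rw [hmulre σ t (x * x), hmulre σ x x, hσx σ]
      ring
    rw [Finset.sum_congr rfl fun σ _ => h4 σ] at h2
    show (∑ σ : F →ₐ[ℚ] ℂ, (σ t).re * (∑ j, (a j : ℝ) * (σ (s j)).re) ^ 2)
        = ∑ j, (a j : ℝ) ^ 2 * ((c j : ℝ))⁻¹
    rw [← h2, Complex.ratCast_re]
    push_cast
    rfl
  -- dual relation of embedding matrices
  have hdualsum : ∀ j k, ∑ σ : F →ₐ[ℚ] ℂ, (σ (r j)).re * (σ (s k)).re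
      = if j = k then 1 else 0 := by
    intro j k
    have h2 := congrArg Complex.re (hembed (r j * s k))
    rw [hdual j k, Complex.re_sum] at h2
    rw [Finset.sum_congr rfl fun σ _ => hmulre σ (r j) (s k)] at h2
    rw [← h2]
    split_ifs <;> simp
  have hcard : Fintype.card (F →ₐ[ℚ] ℂ) = g := by
    rw [AlgHom.card (F := ℚ) (E := F) ℂ, hdeg]
  let e : Fin g ≃ (F →ₐ[ℚ] ℂ) := (Fintype.equivFinOfCardEq hcard).symm
  set A : Matrix (Fin g) (Fin g) ℝ := Matrix.of fun j l => ((e l) (r j)).re with hA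
  set B : Matrix (Fin g) (Fin g) ℝ := Matrix.of fun l k => ((e l) (s k)).re with hB
  have hAB : A * B = 1 := by
    ext j k
    rw [Matrix.mul_apply, Matrix.one_apply]
    rw [← hdualsum j k, ← Equiv.sum_comp e (fun σ => (σ (r j)).re * (σ (s k)).re)]
    rfl
  have hBA : B * A = 1 := mul_eq_one_comm.mp hAB
  set σ₀ : F →ₐ[ℚ] ℂ := φ₀.toRatAlgHom with hσ₀def
  have hσ₀ : ∀ y, σ₀ y = φ₀ y := fun y => rfl
  set v : Fin g → ℝ := fun j => (σ₀ (r j)).re with hvdef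
  have hv : ∀ σ : F →ₐ[ℚ] ℂ, ∑ j, v j * (σ (s j)).re = if σ = σ₀ then 1 else 0 := by
    intro σ
    have h3 := congrFun (congrFun hBA (e.symm σ)) (e.symm σ₀)
    rw [Matrix.mul_apply, Matrix.one_apply] at h3
    have h4 : ∀ l, B (e.symm σ) l * A l (e.symm σ₀) = v l * (σ (s l)).re := by
      intro l
      rw [hA, hB]
      simp only [Matrix.of_apply, Equiv.apply_symm_apply]
      ring
    rw [Finset.sum_congr rfl fun l _ => h4 l] at h3
    rw [h3]
    congr 1
    simp [Equiv.apply_eq_iff_eq, eq_comm]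
  have hfv : f v = (σ₀ t).re := by
    show (∑ σ : F →ₐ[ℚ] ℂ, (σ t).re * (∑ j, v j * (σ (s j)).re) ^ 2) = (σ₀ t).re
    rw [Finset.sum_congr rfl fun σ _ => by rw [hv σ]]
    simp [apply_ite (· ^ (2:ℕ)), mul_ite, Finset.sum_ite_eq]
  have hfvneg : f v < 0 := by
    rw [hfv, hσ₀ t]
    have h5 : φ₀ t ≠ 0 := (map_ne_zero φ₀).mpr htne
    have h6 : (φ₀ t).re ≠ 0 := by
      intro h0
      exact h5 (Complex.ext h0 (htotreal φ₀ t))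
    exact lt_of_le_of_ne hng h6
  have hcont : Continuous f := by
    rw [hf]
    fun_prop
  have hexists : ∃ a : Fin g → ℚ, f (fun j => (a j : ℝ)) < 0 := by
    have hopen : IsOpen (f ⁻¹' Set.Iio 0) := isOpen_Iio.preimage hcont
    rw [Metric.isOpen_iff] at hopen
    obtain ⟨ε, hε, hball⟩ := hopen v hfvneg
    choose a ha using fun j => exists_rat_near (v j) hε
    refine ⟨a, hball ?_⟩
    rw [Metric.mem_ball, dist_pi_lt_iff hε]
    intro j
    rw [Real.dist_eq, abs_sub_comm]
    exact ha j
  obtain ⟨a, ha⟩ := hexists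
  rw [key a] at ha
  have hge : 0 ≤ ∑ j, (a j : ℝ) ^ 2 * ((c j : ℝ))⁻¹ :=
    Finset.sum_nonneg fun j _ => mul_nonneg (sq_nonneg _)
      (inv_nonneg.mpr (le_of_lt (by exact_mod_cast hcpos j)))
  exact absurd ha (not_lt.mpr hge)
end

section
/- Let F be a cubic number field with minimal polynomial relation: α has minimal polynomial aX³ + bX² + cX + d ∈ ℤ[X]. Let I_α = ℤ·1 + ℤ·α + ℤ·α² and R = ℤ·1 + ℤ·(aα) + ℤ·(aα² + bα). Then R · I_α ⊆ I_α, i.e. every element of R multiplies I_α into itself. -/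
open Polynomial Module

/-- If `α` generates a cubic field with minimal polynomial
`aX³ + bX² + cX + d ∈ ℤ[X]`, and `I_α = ⟨1, α, α²⟩_ℤ`,
`R = ⟨1, aα, aα² + bα⟩_ℤ`, then `R · I_α ⊆ I_α`. -/
theorem coefficient_ring_multiplies_lattice
    (F : Type*) [Field F] [Algebra ℚ F] (hdeg : Module.finrank ℚ F = 3)
    (α : F) (a b c d : ℤ)
    (hrel : (a : F) * α ^ 3 + (b : F) * α ^ 2 + (c : F) * α + (d : F) = 0)
    (hirr : Irreducible (C (a : ℚ) * X ^ 3 + C (b : ℚ) * X ^ 2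
      + C (c : ℚ) * X + C (d : ℚ))) :
    ∀ x ∈ Submodule.span ℤ ({1, (a : F) * α, (a : F) * α ^ 2 + (b : F) * α} : Set F),
      ∀ y ∈ Submodule.span ℤ ({1, α, α ^ 2} : Set F),
        x * y ∈ Submodule.span ℤ ({1, α, α ^ 2} : Set F) := by
  intro x hx y hy
  set S := Submodule.span ℤ ({1, α, α ^ 2} : Set F) with hS
  have h1 : (1 : F) ∈ S := Submodule.subset_span (by simp)
  have hα : α ∈ S := Submodule.subset_span (by simp)
  have hα2 : α ^ 2 ∈ S := Submodule.subset_span (by simp)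
  have mem_of_coeffs : ∀ p q r : ℤ, (p : F) * α ^ 2 + (q : F) * α + (r : F) ∈ S := by
    intro p q r
    have : (p : F) * α ^ 2 + (q : F) * α + (r : F)
        = p • (α ^ 2) + q • α + r • (1 : F) := by
      simp [zsmul_eq_mul]
    rw [this]
    exact add_mem (add_mem (S.smul_mem _ hα2) (S.smul_mem _ hα)) (S.smul_mem _ h1)
  have k1 : (a : F) * α * α ^ 2 ∈ S := by
    have : (a : F) * α * α ^ 2 = ((-b : ℤ) : F) * α ^ 2 + ((-c : ℤ) : F) * α + ((-d : ℤ) : F) := by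
      push_cast; linear_combination hrel
    rw [this]; exact mem_of_coeffs _ _ _
  have k2 : ((a : F) * α ^ 2 + (b : F) * α) * α ∈ S := by
    have : ((a : F) * α ^ 2 + (b : F) * α) * α = ((0 : ℤ) : F) * α ^ 2 + ((-c : ℤ) : F) * α + ((-d : ℤ) : F) := by
      push_cast; linear_combination hrel
    rw [this]; exact mem_of_coeffs _ _ _
  have k3 : ((a : F) * α ^ 2 + (b : F) * α) * α ^ 2 ∈ S := by
    have : ((a : F) * α ^ 2 + (b : F) * α) * α ^ 2 = ((-c : ℤ) : F) * α ^ 2 + ((-d : ℤ) : F) * α + ((0 : ℤ) : F) := by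
      push_cast; linear_combination α * hrel
    rw [this]; exact mem_of_coeffs _ _ _
  have k4 : (a : F) * α * 1 ∈ S := by
    have : (a : F) * α * 1 = ((0 : ℤ) : F) * α ^ 2 + ((a : ℤ) : F) * α + ((0 : ℤ) : F) := by push_cast; ring
    rw [this]; exact mem_of_coeffs _ _ _
  have k5 : (a : F) * α * α ∈ S := by
    have : (a : F) * α * α = ((a : ℤ) : F) * α ^ 2 + ((0 : ℤ) : F) * α + ((0 : ℤ) : F) := by push_cast; ring
    rw [this]; exact mem_of_coeffs _ _ _
  have k6 : ((a : F) * α ^ 2 + (b : F) * α) * 1 ∈ S := by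
    have : ((a : F) * α ^ 2 + (b : F) * α) * 1 = ((a : ℤ) : F) * α ^ 2 + ((b : ℤ) : F) * α + ((0 : ℤ) : F) := by push_cast; ring
    rw [this]; exact mem_of_coeffs _ _ _
  have gy : ∀ g ∈ ({1, (a : F) * α, (a : F) * α ^ 2 + (b : F) * α} : Set F),
      g * y ∈ S := by
    intro g hg
    have base : ∀ z ∈ ({1, α, α ^ 2} : Set F), g * z ∈ S := by
      intro z hz
      rcases hg with rfl | rfl | rfl <;> rcases hz with rfl | rfl | rfl
      · simpa using h1
      · simpa using hα
      · simpa using hα2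
      · exact k4
      · exact k5
      · exact k1
      · exact k6
      · exact k2
      · exact k3
    refine Submodule.span_induction ?_ ?_ ?_ ?_ hy
    · exact base
    · simp
    · intro u v _ _ hu hv
      rw [mul_add]; exact add_mem hu hv
    · intro n u _ hu
      rw [mul_smul_comm]; exact S.smul_mem _ hu
  refine Submodule.span_induction ?_ ?_ ?_ ?_ hx
  · exact fun g hg => gy g hg
  · simp
  · intro u v _ _ hu hv
    rw [add_mul]; exact add_mem hu hv
  · intro n u _ hu
    rw [smul_mul_assoc]; exact S.smul_mem _ hu
end

section
/- Let F be a totally real cubic field, (r_1, r_2, r_3) a ℚ-basis of F with dual basis (s_1, s_2, s_3) under the trace pairing, satisfying the rationality condition. Then Σ_{i=1}^{3} (N(r_i) · s_i / r_i) · (1/r_i) = 0, where N is the norm from F to ℚ. -/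
open Module

open Matrix

/-- For a rational basis `(r₁,r₂,r₃)` of a totally real cubic field with
trace-dual basis `(s₁,s₂,s₃)`, one has `Σᵢ (N(rᵢ)·sᵢ/rᵢ)·(1/rᵢ) = 0`. -/
theorem norm_dual_sum_vanishes
    (F : Type*) [Field F] [Algebra ℚ F] [FiniteDimensional ℚ F]
    (hdeg : Module.finrank ℚ F = 3)
    (htotreal : ∀ φ : F →+* ℂ, ∀ x : F, (φ x).im = 0)
    (b : Basis (Fin 3) ℚ F) (r s : Fin 3 → F) (hr : ∀ i, r i = b i)
    (hdual : ∀ i j, Algebra.trace ℚ F (r i * s j) = if i = j then 1 else 0)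
    (hrat : ∀ i j, i ≠ j → ∃ q : ℚ, (r i / s i) / (r j / s j) = algebraMap ℚ F q) :
    ∑ i, algebraMap ℚ F (Algebra.norm ℚ (r i)) * (s i / r i) * (1 / r i) = 0 := by
  classical
  have hr0 : ∀ i, r i ≠ 0 := fun i => (hr i) ▸ b.ne_zero i
  have hs0 : ∀ i, s i ≠ 0 := by
    intro i hsi
    have h := hdual i i
    rw [hsi, mul_zero, map_zero, if_pos rfl] at h
    exact zero_ne_one h
  have hu : s 0 / r 0 ≠ 0 := div_ne_zero (hs0 0) (hr0 0)
  have hq : ∀ i, ∃ q : ℚ, (r i / s i) / (r 0 / s 0) = algebraMap ℚ F q := by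
    intro i
    by_cases h : i = 0
    · exact ⟨1, by rw [h, _root_.map_one, div_self (div_ne_zero (hr0 0) (hs0 0))]⟩
    · exact hrat i 0 h
  choose q hqe using hq
  have hq0 : ∀ i, q i ≠ 0 := by
    intro i h
    have hh := hqe i
    rw [h, map_zero] at hh
    exact (div_ne_zero (div_ne_zero (hr0 i) (hs0 i)) (div_ne_zero (hr0 0) (hs0 0))) hh
  have hqF : ∀ i, algebraMap ℚ F (q i) ≠ 0 := fun i h => hq0 i ((map_eq_zero _).mp h)
  have hs : ∀ i, s i = algebraMap ℚ F (q i)⁻¹ * (s 0 / r 0) * r i := by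
    intro i
    have h := hqe i
    rw [div_div_div_eq, div_eq_iff (mul_ne_zero (hs0 i) (hr0 0))] at h
    -- h : r i * s 0 = algebraMap ℚ F (q i) * (s i * r 0)
    have h2 : s i = r i * s 0 / (algebraMap ℚ F (q i) * r 0) := by
      rw [eq_div_iff (mul_ne_zero (hqF i) (hr0 0))]
      linear_combination -h
    rw [h2, map_inv₀]
    field_simp
  have hd2 : ∀ i j, Algebra.trace ℚ F ((s 0 / r 0) * (r i * r j)) = if i = j then q i else 0 := by
    intro i j
    have h := hdual i j
    rw [hs j] at h
    have e1 : r i * (algebraMap ℚ F (q j)⁻¹ * (s 0 / r 0) * r j)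
        = (q j)⁻¹ • ((s 0 / r 0) * (r i * r j)) := by
      rw [Algebra.smul_def, map_inv₀]; ring
    rw [e1, _root_.map_smul, smul_eq_mul] at h
    split_ifs with he
    · subst he
      have h3 : q i * ((q i)⁻¹ * Algebra.trace ℚ F (s 0 / r 0 * (r i * r i))) = q i * 1 := by
        rw [h, if_pos rfl]
      rwa [← mul_assoc, mul_inv_cancel₀ (hq0 i), one_mul, mul_one] at h3
    · rw [if_neg he] at h
      exact (mul_eq_zero.mp h).resolve_left (inv_ne_zero (hq0 j))
  -- embeddings
  have hcard : Fintype.card (F →ₐ[ℚ] ℂ) = 3 := by rw [AlgHom.card]; exact hdeg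
  let e : Fin 3 ≃ (F →ₐ[ℚ] ℂ) := (Fintype.equivFinOfCardEq hcard).symm
  have hinj : ∀ k : Fin 3, Function.Injective (e k) := fun k => (e k).toRingHom.injective
  have hx0 : ∀ i k, e k (r i) ≠ 0 := by
    intro i k h
    exact hr0 i (hinj k (by rw [map_zero]; exact h))
  have hv0 : ∀ k : Fin 3, e k (s 0 / r 0) ≠ 0 := by
    intro k h
    exact hu (hinj k (by rw [map_zero]; exact h))
  have htr : ∀ y : F, algebraMap ℚ ℂ (Algebra.trace ℚ F y) = ∑ k : Fin 3, e k y := by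
    intro y
    rw [trace_eq_sum_embeddings ℂ]
    exact (Equiv.sum_comp e fun σ => σ y).symm
  have hnrm : ∀ y : F, algebraMap ℚ ℂ (Algebra.norm ℚ y) = ∏ k : Fin 3, e k y := by
    intro y
    rw [Algebra.norm_eq_prod_embeddings ℚ ℂ y]
    exact (Equiv.prod_comp e fun σ => σ y).symm
  -- matrix relation
  set M : Matrix (Fin 3) (Fin 3) ℂ := Matrix.of (fun i k => e k (r i)) with hM_def
  have hM : M * Matrix.diagonal (fun k => e k (s 0 / r 0)) * Mᵀ
      = Matrix.diagonal (fun i => (q i : ℂ)) := by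
    ext i j
    have h := congrArg (algebraMap ℚ ℂ) (hd2 i j)
    rw [htr] at h
    simp only [_root_.map_mul] at h
    rw [apply_ite (algebraMap ℚ ℂ), map_zero, eq_ratCast] at h
    rw [Matrix.mul_apply, Matrix.diagonal_apply, ← h]
    apply Finset.sum_congr rfl
    intro k _
    simp only [Matrix.mul_diagonal, Matrix.transpose_apply, hM_def, Matrix.of_apply]
    ring
  have hone : M * (Matrix.diagonal (fun k => e k (s 0 / r 0)) * Mᵀ
      * Matrix.diagonal (fun i => (q i : ℂ)⁻¹)) = 1 := by
    rw [← Matrix.mul_assoc, ← Matrix.mul_assoc, hM, Matrix.diagonal_mul_diagonal]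
    rw [show (fun i => (q i : ℂ) * (q i : ℂ)⁻¹) = fun _ => (1 : ℂ) from
      funext fun i => mul_inv_cancel₀ (by exact_mod_cast hq0 i)]
    exact Matrix.diagonal_one
  have hcomm := mul_eq_one_comm.mp hone
  have hfinal : Matrix.diagonal (fun k => e k (s 0 / r 0))
      * (Mᵀ * (Matrix.diagonal (fun i => (q i : ℂ)⁻¹) * M)) = 1 := by
    rw [← Matrix.mul_assoc, ← Matrix.mul_assoc]
    exact hcomm
  have h12 : (Mᵀ * (Matrix.diagonal (fun i => (q i : ℂ)⁻¹) * M)) 1 2 = 0 := by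
    have h := congrFun (congrFun hfinal 1) 2
    rw [Matrix.diagonal_mul] at h
    rw [show (1 : Matrix (Fin 3) (Fin 3) ℂ) 1 2 = 0 from
      Matrix.one_apply_ne (by decide)] at h
    exact (mul_eq_zero.mp h).resolve_left (hv0 1)
  have hsum : ∑ i, e 1 (r i) * ((q i : ℂ)⁻¹ * e 2 (r i)) = 0 := by
    rw [← h12, Matrix.mul_apply]
    apply Finset.sum_congr rfl
    intro i _
    rw [Matrix.transpose_apply, Matrix.diagonal_mul]
    simp only [hM_def, Matrix.of_apply]
  -- reduce goal
  have hterm : ∀ i, algebraMap ℚ F (Algebra.norm ℚ (r i)) * (s i / r i) * (1 / r i)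
      = (s 0 / r 0) * (algebraMap ℚ F ((q i)⁻¹ * Algebra.norm ℚ (r i)) / r i) := by
    intro i
    rw [hs i, _root_.map_mul, map_inv₀, mul_div_cancel_right₀ _ (hr0 i)]
    ring
  simp only [hterm]
  rw [← Finset.mul_sum]
  apply mul_eq_zero_of_right
  have hker : ∀ y : F, (e 0) y = 0 → y = 0 := fun y hy =>
    hinj 0 (hy.trans (_root_.map_zero ((e 0) : F →ₐ[ℚ] ℂ)).symm)
  apply hker
  rw [map_sum, ← hsum]
  apply Finset.sum_congr rfl
  intro i _
  rw [map_div₀, AlgHom.commutes, _root_.map_mul, map_inv₀, eq_ratCast, hnrm,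
    Fin.prod_univ_three]
  rw [show ((q i : ℂ))⁻¹ * ((e 0) (r i) * (e 1) (r i) * (e 2) (r i))
      = ((q i : ℂ))⁻¹ * ((e 1) (r i) * (e 2) (r i)) * (e 0) (r i) from by ring,
    mul_div_cancel_right₀ _ (hx0 i 0)]
  ring
end

section
/- Let T = 𝔾_m^{k+ℓ} sit inside ℂ^k × (ℂ*)^ℓ, let L be a subgroup of ℤ^k ⊕ ℤ^ℓ with torsion-free quotient, and φ : L → ℂ* a homomorphism. Let T_{L,φ} ⊂ T be the subvariety cut out by the monomial equations z^a w^b = φ(a,b) for (a,b) ∈ L, and let Δ = {0} × (ℂ*)^ℓ. Let C = {(a,b) : a_i ≥ 0 for all i} and N = {0} ⊕ ℤ^ℓ. Then the closure of T_{L,φ} in ℂ^k × (ℂ*)^ℓ meets Δ if and only if L ∩ C ⊆ N. -/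
open Set

/-- The translated subtorus of `(ℂ*)^{k+ℓ}` cut out by the monomial equations
`z^a w^b = φ(a,b)` for `(a,b) ∈ L`. -/
def torusVar (k l : ℕ) (L : AddSubgroup ((Fin k → ℤ) × (Fin l → ℤ)))
    (φ : L → ℂˣ) : Set ((Fin k → ℂ) × (Fin l → ℂ)) :=
  {p | (∀ i, p.1 i ≠ 0) ∧ (∀ j, p.2 j ≠ 0) ∧
    ∀ v : L, (∏ i, p.1 i ^ ((v : (Fin k → ℤ) × (Fin l → ℤ)).1 i)) *
      (∏ j, p.2 j ^ ((v : (Fin k → ℤ) × (Fin l → ℤ)).2 j)) = (φ v : ℂ)}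

open Matrix Finset in
/-- Farkas-type alternative over `ℚ`, proved by induction on the finite family. -/
lemma my_farkas {ι : Type} [DecidableEq ι] {d : ℕ} (s : Finset ι) :
    ∀ (w : ι → Fin d → ℚ) (b : Fin d → ℚ),
    (∃ μ : ι → ℚ, (∀ j, 0 ≤ μ j) ∧ ∑ j ∈ s, μ j • w j = b) ∨
    (∃ y : Fin d → ℚ, (∀ j ∈ s, 0 ≤ y ⬝ᵥ w j) ∧ y ⬝ᵥ b < 0) := by
  induction s using Finset.induction_on with
  | empty =>
    intro w b
    by_cases hb : b = 0
    · exact Or.inl ⟨0, fun j => le_refl 0, by simp [hb]⟩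
    · refine Or.inr ⟨-b, by simp, ?_⟩
      have hpos : 0 < b ⬝ᵥ b := by
        obtain ⟨i, hi⟩ := Function.ne_iff.mp hb
        exact Finset.sum_pos' (fun i _ => mul_self_nonneg _)
          ⟨i, Finset.mem_univ i, mul_self_pos.mpr hi⟩
      simpa [neg_dotProduct] using neg_lt_zero.mpr hpos
  | @insert a s ha ih =>
    intro w b
    rcases ih w b with ⟨μ, hμ, hsum⟩ | ⟨y, hy, hyb⟩
    · left
      refine ⟨fun j => if j = a then 0 else μ j, fun j => ?_, ?_⟩
      · dsimp only; split_ifs; exacts [le_refl 0, hμ j]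
      · rw [Finset.sum_insert ha]
        dsimp only
        rw [if_pos rfl, zero_smul, zero_add]
        refine (Finset.sum_congr rfl fun j hj => ?_).trans hsum
        rw [if_neg (ne_of_mem_of_not_mem hj ha)]
    · by_cases hwa : 0 ≤ y ⬝ᵥ w a
      · right
        refine ⟨y, fun j hj => ?_, hyb⟩
        rcases Finset.mem_insert.mp hj with rfl | hj
        exacts [hwa, hy j hj]
      · push_neg at hwa
        set c : ℚ := y ⬝ᵥ w a with hc
        have hc0 : c ≠ 0 := ne_of_lt hwa
        rcases ih (fun j => w j - (y ⬝ᵥ w j / c) • w a) (b - (y ⬝ᵥ b / c) • w a) with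
          ⟨μ, hμ, hsum⟩ | ⟨z, hz, hzb⟩
        · left
          set co : ℚ := y ⬝ᵥ b / c - ∑ j ∈ s, μ j * (y ⬝ᵥ w j / c) with hco
          have hsum2 : ∑ j ∈ s, μ j • w j
              = (b - (y ⬝ᵥ b / c) • w a) + (∑ j ∈ s, μ j * (y ⬝ᵥ w j / c)) • w a := by
            rw [← hsum, Finset.sum_smul, ← Finset.sum_add_distrib]
            refine Finset.sum_congr rfl fun j hj => ?_
            rw [smul_sub, smul_smul]
            abel
          refine ⟨fun j => if j = a then co else μ j, fun j => ?_, ?_⟩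
          · dsimp only; split_ifs with hja
            · have h1 : 0 < y ⬝ᵥ b / c := div_pos_of_neg_of_neg hyb hwa
              have h2 : ∑ j ∈ s, μ j * (y ⬝ᵥ w j / c) ≤ 0 := by
                refine Finset.sum_nonpos fun j hj => ?_
                exact mul_nonpos_of_nonneg_of_nonpos (hμ j)
                  (div_nonpos_of_nonneg_of_nonpos (hy j hj) (le_of_lt hwa))
              rw [hco]; linarith
            · exact hμ j
          · rw [Finset.sum_insert ha]
            dsimp only
            rw [if_pos rfl]
            have h1 : ∑ x ∈ s, (if x = a then co else μ x) • w x = ∑ j ∈ s, μ j • w j :=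
              Finset.sum_congr rfl fun j hj => by rw [if_neg (ne_of_mem_of_not_mem hj ha)]
            rw [h1, hsum2, hco, sub_smul]
            abel
        · right
          have hgen : ∀ x, (z - (z ⬝ᵥ w a / c) • y) ⬝ᵥ x
              = z ⬝ᵥ (x - (y ⬝ᵥ x / c) • w a) := by
            intro x
            rw [sub_dotProduct, smul_dotProduct, dotProduct_sub,
              dotProduct_smul, smul_eq_mul, smul_eq_mul]
            ring
          have hzero : (z - (z ⬝ᵥ w a / c) • y) ⬝ᵥ w a = 0 := by
            rw [hgen, ← hc, div_self hc0, one_smul, sub_self, dotProduct_zero]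
          refine ⟨z - (z ⬝ᵥ w a / c) • y, fun j hj => ?_, ?_⟩
          · rcases Finset.mem_insert.mp hj with rfl | hj'
            · exact hzero.ge
            · rw [hgen]; exact hz j hj'
          · rw [hgen]; exact hzb

open Matrix Finset in
/-- Stiemke-type lemma over `ℚ`: if no nonzero nonnegative vector lies in the row space
of `w`, then there is a strictly positive vector orthogonal to all rows of `w`. -/
lemma my_stiemke {k m : ℕ} (w : Fin m → Fin k → ℚ)
    (h : ∀ y : Fin m → ℚ, (∀ i, 0 ≤ ∑ j, y j * w j i) → ∀ i, (∑ j, y j * w j i) = 0) :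
    ∃ u : Fin k → ℚ, (∀ i, 0 < u i) ∧ ∀ j, ∑ i, u i * w j i = 0 := by
  have key : ∀ i₀ : Fin k, ∃ μ : Fin k → ℚ, (∀ i, 0 ≤ μ i) ∧
      ∑ i, μ i • (fun j => w j i) = -(fun j => w j i₀) := by
    intro i₀
    rcases my_farkas Finset.univ (fun i (j : Fin m) => w j i) (-(fun j => w j i₀)) with
      h1 | ⟨y, hy, hyb⟩
    · exact h1.imp fun μ ⟨h1, h2⟩ => ⟨h1, h2⟩
    · exfalso
      have hy' : ∀ i, 0 ≤ ∑ j, y j * w j i := by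
        intro i
        simpa [dotProduct] using hy i (Finset.mem_univ i)
      have h0 := h y hy' i₀
      have : y ⬝ᵥ (-(fun j => w j i₀)) = -(∑ j, y j * w j i₀) := by
        simp [dotProduct]
      rw [this, h0] at hyb
      simp at hyb
  choose μ hμ0 hμs using key
  refine ⟨fun i => (∑ i₀, μ i₀ i) + 1, fun i => ?_, ?_⟩
  all_goals dsimp only
  · have : 0 ≤ ∑ i₀, μ i₀ i := Finset.sum_nonneg fun i₀ _ => hμ0 i₀ i
    linarith
  · intro j
    have happ : ∀ i₀ : Fin k, ∑ i, μ i₀ i * w j i = -(w j i₀) := by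
      intro i₀
      have := congrFun (hμs i₀) j
      simpa [Finset.sum_apply] using this
    have : ∑ i, ((∑ i₀, μ i₀ i) + 1) * w j i
        = ∑ i₀, (∑ i, μ i₀ i * w j i) + ∑ i, w j i := by
      rw [Finset.sum_comm]
      rw [← Finset.sum_add_distrib]
      refine Finset.sum_congr rfl fun i _ => ?_
      rw [add_mul, one_mul, Finset.sum_mul]
    rw [this]
    simp [happ]

open Finset in
/-- If every member of `L` with nonnegative first coordinates has vanishing first
coordinates, then every nonnegative rational vector in the span of the (casts of the)
first projections of members of `L` is zero. -/
lemma aux_span {k l : ℕ} (L : AddSubgroup ((Fin k → ℤ) × (Fin l → ℤ)))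
    (h : ∀ v : L, (∀ i, 0 ≤ (v : (Fin k → ℤ) × (Fin l → ℤ)).1 i) →
      (v : (Fin k → ℤ) × (Fin l → ℤ)).1 = 0)
    {x : Fin k → ℚ}
    (hx : x ∈ Submodule.span ℚ
      {y : Fin k → ℚ | ∃ v : L, y = fun i => (((v : (Fin k → ℤ) × (Fin l → ℤ)).1 i : ℤ) : ℚ)})
    (hx0 : ∀ i, 0 ≤ x i) : x = 0 := by
  rw [Submodule.mem_span_set'] at hx
  obtain ⟨n, c, g, hfg⟩ := hx
  choose v hvg using fun i => (g i).2
  set N : ℕ := ∏ i, (c i).den with hN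
  have hNpos : 0 < N := Finset.prod_pos fun i _ => (c i).pos
  have hzq : ∀ i, ∃ z : ℤ, (z : ℚ) = (N : ℚ) * c i := by
    intro i
    obtain ⟨M, hM⟩ := Finset.dvd_prod_of_mem (fun i => (c i).den) (Finset.mem_univ i)
    have hMN : N = (c i).den * M := by rw [hN, hM]
    have hden : ((c i).den : ℚ) ≠ 0 := by exact_mod_cast (c i).den_ne_zero
    have h1 : ((c i).num : ℚ) = c i * ((c i).den : ℚ) :=
      (div_eq_iff hden).mp (Rat.num_div_den (c i))
    refine ⟨M * (c i).num, ?_⟩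
    rw [hMN]
    push_cast
    rw [h1]
    ring
  choose z hz using hzq
  have hVmem : (∑ i, z i • ((v i : L) : (Fin k → ℤ) × (Fin l → ℤ))) ∈ L :=
    AddSubgroup.sum_mem L fun i _ => AddSubgroup.zsmul_mem L (v i).2 (z i)
  set V : L := ⟨∑ i, z i • ((v i : L) : (Fin k → ℤ) × (Fin l → ℤ)), hVmem⟩ with hV
  have hfstgen : ∀ t : Finset (Fin n), (∑ i ∈ t, z i • ((v i : L) : (Fin k → ℤ) × (Fin l → ℤ))).1
      = ∑ i ∈ t, z i • ((v i : L) : (Fin k → ℤ) × (Fin l → ℤ)).1 := by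
    intro t
    induction t using Finset.induction_on with
    | empty => rfl
    | @insert a s ha ih =>
      rw [Finset.sum_insert ha, Finset.sum_insert ha, Prod.fst_add, ih]
      rfl
  have hfst : (V : (Fin k → ℤ) × (Fin l → ℤ)).1
      = ∑ i, z i • ((v i : L) : (Fin k → ℤ) × (Fin l → ℤ)).1 := hfstgen Finset.univ
  have hcast : ∀ i', (((V : (Fin k → ℤ) × (Fin l → ℤ)).1 i' : ℤ) : ℚ) = (N : ℚ) * x i' := by
    intro i'
    rw [hfst]
    have h1 : ((∑ i, z i • ((v i : L) : (Fin k → ℤ) × (Fin l → ℤ)).1) i')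
        = ∑ i, z i * ((v i : L) : (Fin k → ℤ) × (Fin l → ℤ)).1 i' := by
      rw [Finset.sum_apply]; rfl
    rw [h1]
    push_cast
    rw [← hfg, Finset.sum_apply, Finset.mul_sum]
    refine Finset.sum_congr rfl fun i _ => ?_
    have h2 : ((g i : Fin k → ℚ)) i'
        = ((((v i : L) : (Fin k → ℤ) × (Fin l → ℤ)).1 i' : ℤ) : ℚ) := by rw [hvg i]
    rw [hz i, Pi.smul_apply, smul_eq_mul, h2]
    ring
  have hge : ∀ i', 0 ≤ (V : (Fin k → ℤ) × (Fin l → ℤ)).1 i' := by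
    intro i'
    have h3 : (0 : ℚ) ≤ (((V : (Fin k → ℤ) × (Fin l → ℤ)).1 i' : ℤ) : ℚ) := by
      rw [hcast i']
      exact mul_nonneg (by positivity) (hx0 i')
    exact_mod_cast h3
  have h4 := h V hge
  funext i'
  have h5 : (N : ℚ) * x i' = 0 := by
    rw [← hcast i', h4]; simp
  have h6 : (N : ℚ) ≠ 0 := by
    exact_mod_cast hNpos.ne'
  have := (mul_eq_zero.mp h5).resolve_left h6
  simpa using this

/-- Torus closure theorem: the closure of `T_{L,φ}` in `ℂᵏ × (ℂ*)ˡ` meets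
`Δ = {0} × (ℂ*)ˡ` if and only if `L ∩ C ⊆ N`, i.e. every element of `L` whose
first `k` coordinates are all nonnegative has vanishing first `k` coordinates. -/
theorem torus_closure_meets_boundary_iff
    (k l : ℕ) (L : AddSubgroup ((Fin k → ℤ) × (Fin l → ℤ)))
    (hsat : ∀ (v : (Fin k → ℤ) × (Fin l → ℤ)) (m : ℤ), m ≠ 0 → m • v ∈ L → v ∈ L)
    (φ : L → ℂˣ) (hφ : ∀ x y : L, φ (x + y) = φ x * φ y)
    (hne : (torusVar k l L φ).Nonempty) :
    (∃ p ∈ closure (torusVar k l L φ), p.1 = 0 ∧ ∀ j, p.2 j ≠ 0) ↔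
      (∀ v : L, (∀ i, 0 ≤ (v : (Fin k → ℤ) × (Fin l → ℤ)).1 i) →
        (v : (Fin k → ℤ) × (Fin l → ℤ)).1 = 0) := by
  constructor
  · rintro ⟨p, hp, hp0, hp2⟩ v hv
    by_contra hne0
    obtain ⟨i₀, hi₀⟩ : ∃ i, (v : (Fin k → ℤ) × (Fin l → ℤ)).1 i ≠ 0 := by
      by_contra hc; push_neg at hc; exact hne0 (funext hc)
    set F : (Fin k → ℂ) × (Fin l → ℂ) → ℂ :=
      fun q => (∏ i, q.1 i ^ ((v : (Fin k → ℤ) × (Fin l → ℤ)).1 i).toNat) *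
        ∏ j, q.2 j ^ ((v : (Fin k → ℤ) × (Fin l → ℤ)).2 j) with hF
    have hconst : ∀ q ∈ torusVar k l L φ, F q = (φ v : ℂ) := by
      intro q hq
      obtain ⟨hq1, hq2, hq3⟩ := hq
      rw [← hq3 v, hF]
      dsimp only
      congr 1
      refine Finset.prod_congr rfl fun i _ => ?_
      rw [← zpow_natCast, Int.toNat_of_nonneg (hv i)]
    have hFcont : Filter.Tendsto F (nhds p) (nhds (F p)) := by
      rw [hF]
      apply Filter.Tendsto.mul
      · apply tendsto_finset_prod
        intro i _
        exact (((continuous_apply i).comp continuous_fst).pow _).tendsto p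
      · apply tendsto_finset_prod
        intro j _
        have hcj : ContinuousAt (fun q : (Fin k → ℂ) × (Fin l → ℂ) => q.2 j) p :=
          ((continuous_apply j).comp continuous_snd).continuousAt
        exact hcj.zpow₀ _ (Or.inl (hp2 j))
    have hF0 : F p = 0 := by
      have hzero : p.1 i₀ = 0 := by rw [hp0]; rfl
      rw [hF]
      dsimp only
      rw [Finset.prod_eq_zero (Finset.mem_univ i₀), zero_mul]
      rw [hzero]
      refine zero_pow ?_
      have h1 := hv i₀
      omega
    have hne' : (nhdsWithin p (torusVar k l L φ)).NeBot :=
      mem_closure_iff_nhdsWithin_neBot.mp hp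
    have h1 : Filter.Tendsto F (nhdsWithin p (torusVar k l L φ)) (nhds 0) := by
      rw [← hF0]; exact hFcont.mono_left nhdsWithin_le_nhds
    have h2 : Filter.Tendsto F (nhdsWithin p (torusVar k l L φ)) (nhds (φ v : ℂ)) := by
      refine Filter.Tendsto.congr' ?_ tendsto_const_nhds
      filter_upwards [self_mem_nhdsWithin] with q hq
      exact (hconst q hq).symm
    exact (φ v).ne_zero (tendsto_nhds_unique h2 h1)
  · intro h
    obtain ⟨p, hp1, hp2, hp3⟩ := hne
    obtain ⟨m, f, hf⟩ := Submodule.fg_iff_exists_fin_generating_family.mp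
      (IsNoetherian.noetherian (Submodule.span ℚ
        {y : Fin k → ℚ | ∃ v : L, y = fun i => (((v : (Fin k → ℤ) × (Fin l → ℤ)).1 i : ℤ) : ℚ)}))
    have hfW : ∀ j, f j ∈ Submodule.span ℚ
        {y : Fin k → ℚ | ∃ v : L, y = fun i => (((v : (Fin k → ℤ) × (Fin l → ℤ)).1 i : ℤ) : ℚ)} :=
      fun j => hf ▸ Submodule.subset_span (Set.mem_range_self j)
    have hkey : ∀ y : Fin m → ℚ, (∀ i, 0 ≤ ∑ j, y j * f j i) → ∀ i, (∑ j, y j * f j i) = 0 := by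
      intro y hy
      have hxval : (fun i => ∑ j, y j * f j i) = ∑ j, y j • f j := by
        funext i
        rw [Finset.sum_apply]
        rfl
      have hxmem : (fun i => ∑ j, y j * f j i) ∈ Submodule.span ℚ
          {y : Fin k → ℚ | ∃ v : L,
            y = fun i => (((v : (Fin k → ℤ) × (Fin l → ℤ)).1 i : ℤ) : ℚ)} := by
        rw [hxval]
        exact Submodule.sum_mem _ fun j _ => Submodule.smul_mem _ _ (hfW j)
      have h0 := aux_span L h hxmem hy
      intro i
      exact congrFun h0 i
    obtain ⟨u, hu, hortho⟩ := my_stiemke (fun j i => f j i) hkey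
    have horth : ∀ x ∈ Submodule.span ℚ
        {y : Fin k → ℚ | ∃ v : L, y = fun i => (((v : (Fin k → ℤ) × (Fin l → ℤ)).1 i : ℤ) : ℚ)},
        ∑ i, u i * x i = 0 := by
      intro x hx
      rw [← hf] at hx
      induction hx using Submodule.span_induction with
      | mem x hxS =>
        obtain ⟨j, rfl⟩ := hxS
        exact hortho j
      | zero => simp
      | add x y hx hy ihx ihy =>
        have : ∑ i, u i * (x + y) i = ∑ i, u i * x i + ∑ i, u i * y i := by
          rw [← Finset.sum_add_distrib]
          exact Finset.sum_congr rfl fun i _ => by rw [Pi.add_apply, mul_add]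
        rw [this, ihx, ihy, add_zero]
      | smul a x hx ihx =>
        have : ∑ i, u i * (a • x) i = a * ∑ i, u i * x i := by
          rw [Finset.mul_sum]
          exact Finset.sum_congr rfl fun i _ => by
            rw [Pi.smul_apply, smul_eq_mul]; ring
        rw [this, ihx, mul_zero]
    have hR : ∀ v : L, ∑ i, (u i : ℝ) * (((v : (Fin k → ℤ) × (Fin l → ℤ)).1 i : ℤ) : ℝ) = 0 := by
      intro v
      have hq := horth _ (Submodule.subset_span ⟨v, rfl⟩)
      have : ((∑ i, u i * (((v : (Fin k → ℤ) × (Fin l → ℤ)).1 i : ℤ) : ℚ) : ℚ) : ℝ)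
          = ∑ i, (u i : ℝ) * (((v : (Fin k → ℤ) × (Fin l → ℤ)).1 i : ℤ) : ℝ) := by
        push_cast
        rfl
      rw [← this, hq]
      exact Rat.cast_zero
    set u₀ : Fin k → ℝ := fun i => (u i : ℝ) with hu₀
    have hu₀pos : ∀ i, 0 < u₀ i := fun i => Rat.cast_pos.mpr (hu i)
    have hmem : ∀ t : ℝ, 0 < t →
        ((fun i => ((t ^ (-(u₀ i)) : ℝ) : ℂ) * p.1 i, p.2) : (Fin k → ℂ) × (Fin l → ℂ))
          ∈ torusVar k l L φ := by
      intro t ht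
      refine ⟨fun i => mul_ne_zero ?_ (hp1 i), hp2, ?_⟩
      · exact_mod_cast (Real.rpow_pos_of_pos ht _).ne'
      · intro v
        have key : (∏ i, (((t ^ (-(u₀ i)) : ℝ) : ℂ) * p.1 i) ^
              ((v : (Fin k → ℤ) × (Fin l → ℤ)).1 i))
            = (∏ i, (((t ^ (-(u₀ i)) : ℝ) : ℂ)) ^ ((v : (Fin k → ℤ) × (Fin l → ℤ)).1 i)) *
              ∏ i, (p.1 i) ^ ((v : (Fin k → ℤ) × (Fin l → ℤ)).1 i) := by
          rw [← Finset.prod_mul_distrib]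
          exact Finset.prod_congr rfl fun i _ => mul_zpow _ _ _
        have hreal : (∏ i, ((t ^ (-(u₀ i)) : ℝ)) ^ ((v : (Fin k → ℤ) × (Fin l → ℤ)).1 i))
            = (1 : ℝ) := by
          have hterm : ∀ i, ((t : ℝ) ^ (-(u₀ i))) ^ ((v : (Fin k → ℤ) × (Fin l → ℤ)).1 i)
              = Real.exp (Real.log t *
                (-(u₀ i) * (((v : (Fin k → ℤ) × (Fin l → ℤ)).1 i : ℤ) : ℝ))) := by
            intro i
            rw [← Real.rpow_intCast (t ^ (-(u₀ i))) _, ← Real.rpow_mul ht.le,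
              Real.rpow_def_of_pos ht]
          rw [Finset.prod_congr rfl fun i _ => hterm i, ← Real.exp_sum, ← Finset.mul_sum]
          have hzz : ∑ i, (-(u₀ i) * (((v : (Fin k → ℤ) × (Fin l → ℤ)).1 i : ℤ) : ℝ)) = 0 := by
            simp only [neg_mul]
            rw [Finset.sum_neg_distrib, hR v, neg_zero]
          rw [hzz, mul_zero, Real.exp_zero]
        have hone : (∏ i, (((t ^ (-(u₀ i)) : ℝ) : ℂ)) ^
            ((v : (Fin k → ℤ) × (Fin l → ℤ)).1 i)) = 1 := by
          rw [Finset.prod_congr rfl fun i _ => (Complex.ofReal_zpow _ _).symm,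
            ← Complex.ofReal_prod, hreal, Complex.ofReal_one]
        rw [key, mul_assoc, hp3 v, hone, one_mul]
    have htend : Filter.Tendsto
        (fun t : ℝ => ((fun i => ((t ^ (-(u₀ i)) : ℝ) : ℂ) * p.1 i, p.2) :
          (Fin k → ℂ) × (Fin l → ℂ))) Filter.atTop (nhds (0, p.2)) := by
      refine Filter.Tendsto.prodMk_nhds ?_ tendsto_const_nhds
      rw [tendsto_pi_nhds]
      intro i
      have h1 : Filter.Tendsto (fun t : ℝ => t ^ (-(u₀ i))) Filter.atTop (nhds 0) :=
        tendsto_rpow_neg_atTop (hu₀pos i)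
      have h2 : Filter.Tendsto (fun t : ℝ => ((t ^ (-(u₀ i)) : ℝ) : ℂ)) Filter.atTop
          (nhds 0) := by
        have := (Complex.continuous_ofReal.tendsto 0).comp h1
        simpa [Function.comp_def] using this
      have := h2.mul_const (p.1 i)
      simpa using this
    exact ⟨(0, p.2), mem_closure_of_tendsto htend
      (Filter.eventually_atTop.mpr ⟨1, fun t ht => hmem t (lt_of_lt_of_le one_pos ht)⟩),
      rfl, hp2⟩
end

section
/- In the setting of the torus closure theorem: if L ∩ C ⊆ N, then the intersection of the closure of T_{L,φ} with Δ = {0} × (ℂ*)^ℓ equals Δ_{L,φ}, the subvariety of Δ cut out by the equations λ_{(0,b)}(w) = φ(0,b) for (0,b) ∈ L ∩ N. -/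
open Set

/-- The subvariety `Δ_{L,φ}` of `Δ = {0} × (ℂ*)ˡ` cut out by the equations
`λ_{(0,b)}(w) = φ(0,b)` for `(0,b) ∈ L ∩ N`. -/
def deltaVar (k l : ℕ) (L : AddSubgroup ((Fin k → ℤ) × (Fin l → ℤ)))
    (φ : L → ℂˣ) : Set ((Fin k → ℂ) × (Fin l → ℂ)) :=
  {p | p.1 = 0 ∧ (∀ j, p.2 j ≠ 0) ∧
    ∀ v : L, (v : (Fin k → ℤ) × (Fin l → ℤ)).1 = 0 →
      (∏ j, p.2 j ^ ((v : (Fin k → ℤ) × (Fin l → ℤ)).2 j)) = (φ v : ℂ)}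



lemma rat_indep_to_real {ι : Type} [Fintype ι] [DecidableEq ι] {n : ℕ} (v : Fin n → (ι → ℚ))
    (hv : LinearIndependent ℚ v) :
    LinearIndependent ℝ (fun t => (fun i => (v t i : ℝ)) : Fin n → (ι → ℝ)) := by
  classical
  let h : (Fin n → ℚ) →ₗ[ℚ] (ι → ℚ) :=
    { toFun := fun d => ∑ t, d t • v t
      map_add' := by
        intro a b
        simp [add_smul, Finset.sum_add_distrib]
      map_smul' := by
        intro c a
        simp [smul_smul, Finset.smul_sum] }
  have hinj : Function.Injective h := by
    rw [← LinearMap.ker_eq_bot, LinearMap.ker_eq_bot']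
    intro d hd
    have := Fintype.linearIndependent_iff.1 hv d hd
    funext t; exact this t
  obtain ⟨g, hg⟩ := h.exists_leftInverse_of_injective (LinearMap.ker_eq_bot.2 hinj)
  rw [Fintype.linearIndependent_iff]
  intro c hc t
  have key : ∀ y : ι → ℚ, ∀ s,
      (g y) s = ∑ i, y i * (g (Pi.single i 1)) s := by
    intro y s
    have hy : y = ∑ i, y i • (Pi.single i (1:ℚ) : ι → ℚ) := by
      funext i'
      simp [Finset.sum_apply, Pi.single_apply, Finset.sum_ite_eq', mul_comm]
    conv_lhs => rw [hy]
    simp [Finset.sum_apply, smul_eq_mul]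
  have hrel : ∀ s, (0:ℝ) = ∑ i, (∑ t', c t' * (v t' i : ℝ)) * ((g (Pi.single i 1)) s : ℝ) := by
    intro s
    have := congrFun hc
    simp only [Finset.sum_apply, Pi.smul_apply, smul_eq_mul, Pi.zero_apply] at this
    simp [this]
  have hgv : ∀ t' s, ∑ i, ((v t' i : ℝ)) * ((g (Pi.single i 1)) s : ℝ)
      = ((Pi.single t' (1:ℚ) : Fin n → ℚ) s : ℝ) := by
    intro t' s
    have h1 : g (v t') = (Pi.single t' (1:ℚ) : Fin n → ℚ) := by
      have h2 : h (Pi.single t' (1:ℚ) : Fin n → ℚ) = v t' := by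
        simp only [h, LinearMap.coe_mk, AddHom.coe_mk]
        funext i'
        simp [Finset.sum_apply, Pi.single_apply, Pi.smul_apply,
          apply_ite (fun f : ι → ℚ => f i'), Finset.sum_ite_eq']
      rw [← h2]
      have := LinearMap.congr_fun hg (Pi.single t' (1:ℚ) : Fin n → ℚ)
      simpa using this
    have h3 := key (v t') s
    rw [h1] at h3
    have h4 := congrArg (fun q : ℚ => (q : ℝ)) h3
    push_cast at h4
    rw [← h4]
  have final : (0:ℝ) = ∑ t', c t' * ((Pi.single t' (1:ℚ) : Fin n → ℚ) t : ℝ) := by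
    calc (0:ℝ) = ∑ i, (∑ t', c t' * (v t' i : ℝ)) * ((g (Pi.single i 1)) t : ℝ) := hrel t
    _ = ∑ i, ∑ t', c t' * ((v t' i : ℝ) * ((g (Pi.single i 1)) t : ℝ)) := by
        congr 1; funext i; rw [Finset.sum_mul]; congr 1; funext t'; ring
    _ = ∑ t', ∑ i, c t' * ((v t' i : ℝ) * ((g (Pi.single i 1)) t : ℝ)) := Finset.sum_comm
    _ = ∑ t', c t' * ((Pi.single t' (1:ℚ) : Fin n → ℚ) t : ℝ) := by
        congr 1; funext t'; rw [← Finset.mul_sum, hgv]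
  rw [Finset.sum_eq_single t] at final
  · simpa using final.symm
  · intro b _ hb; simp [Pi.single_apply, hb]
  · intro hb; simp at hb


lemma rat_nonneg_step {k r : ℕ} (m : Fin r → (Fin k → ℤ))
    (hM : ∀ e : Fin r → ℤ, (∀ i, 0 ≤ ∑ j, e j * m j i) → ∀ i, ∑ j, e j * m j i = 0)
    (d : Fin r → ℚ) (hd : ∀ i, 0 ≤ ∑ j, d j * (m j i : ℚ)) :
    ∀ i, ∑ j, d j * (m j i : ℚ) = 0 := by
  classical
  set N : ℤ := ∏ j, ((d j).den : ℤ) with hN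
  have hNpos : 0 < N := Finset.prod_pos (fun j _ => by positivity)
  set e : Fin r → ℤ := fun j => (d j).num * ∏ j' ∈ Finset.univ.erase j, ((d j').den : ℤ) with he
  have key : ∀ j, ((e j : ℤ) : ℚ) = (N : ℚ) * d j := by
    intro j
    have h1 : ((d j).num : ℚ) = d j * ((d j).den : ℚ) := (Rat.mul_den_eq_num (d j)).symm
    have h2 : (∏ j' ∈ Finset.univ.erase j, ((d j').den : ℤ)) * ((d j).den : ℤ) = N := by
      rw [hN]
      exact Finset.prod_erase_mul _ _ (Finset.mem_univ j)
    push_cast [he]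
    rw [h1]
    push_cast [← h2]
    ring
  have hsum : ∀ i, ((∑ j, e j * m j i : ℤ) : ℚ) = (N : ℚ) * ∑ j, d j * (m j i : ℚ) := by
    intro i
    push_cast
    rw [Finset.mul_sum]
    congr 1
    funext j
    have := key j
    push_cast at this
    rw [this]; ring
  have hnn : ∀ i, 0 ≤ ∑ j, e j * m j i := by
    intro i
    have : (0:ℚ) ≤ ((∑ j, e j * m j i : ℤ) : ℚ) := by
      rw [hsum i]
      have := hd i
      positivity
    exact_mod_cast this
  have hz := hM e hnn
  intro i
  have : ((∑ j, e j * m j i : ℤ) : ℚ) = 0 := by exact_mod_cast hz i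
  rw [hsum i] at this
  rcases mul_eq_zero.1 this with h | h
  · exfalso; have : (N:ℚ) ≠ 0 := by positivity
    exact this h
  · exact h


lemma real_nonneg_step {k r : ℕ} (m : Fin r → (Fin k → ℤ))
    (hM : ∀ e : Fin r → ℤ, (∀ i, 0 ≤ ∑ j, e j * m j i) → ∀ i, ∑ j, e j * m j i = 0)
    (c : Fin r → ℝ) (hc : ∀ i, 0 ≤ ∑ j, c j * (m j i : ℝ)) :
    ∀ i, ∑ j, c j * (m j i : ℝ) = 0 := by
  classical
  by_contra hx
  push_neg at hx
  obtain ⟨i₀, hi₀⟩ := hx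
  set x : Fin k → ℝ := fun i => ∑ j, c j * (m j i : ℝ) with hxdef
  have hS0 : 0 < x i₀ := lt_of_le_of_ne (hc i₀) (Ne.symm hi₀)
  set S : Finset (Fin k) := Finset.univ.filter (fun i => 0 < x i) with hSdef
  have hi₀S : i₀ ∈ S := by simp [hSdef, hS0]
  have hzero : ∀ i, i ∉ S → x i = 0 := by
    intro i hi
    have : ¬ 0 < x i := by
      intro h; exact hi (by simp [hSdef, h])
    linarith [hc i]
  -- the rational linear map recording the equations for i ∉ S
  set gZ : (Fin r → ℚ) →ₗ[ℚ] ({i : Fin k // i ∉ S} → ℚ) :=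
    { toFun := fun d => fun i => ∑ j, d j * ((m j i.val : ℤ) : ℚ)
      map_add' := by intro a b; funext i; simp [add_mul, Finset.sum_add_distrib]
      map_smul' := by intro a b; funext i; simp [Finset.mul_sum, mul_assoc] } with hgZ
  set K := LinearMap.ker gZ with hK
  -- a finite generating family of K
  obtain ⟨q, w, hw⟩ := Submodule.fg_iff_exists_fin_generating_family.1 (IsNoetherian.noetherian K)
  -- a complement of K with a basis
  obtain ⟨C, hC⟩ := Submodule.exists_isCompl K
  set dC := Module.finrank ℚ C with hdC
  set bC : Module.Basis (Fin dC) ℚ C := Module.finBasis ℚ C with hbC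
  set F : (Fin q ⊕ Fin dC) → (Fin r → ℚ) :=
    Sum.elim w (fun t => (bC t : Fin r → ℚ)) with hF
  have hFspan : Submodule.span ℚ (Set.range F) = ⊤ := by
    rw [hF, Set.Sum.elim_range, Submodule.span_union, hw]
    have : Submodule.span ℚ (Set.range fun t => (bC t : Fin r → ℚ)) = C := by
      have h1 : (Set.range fun t => (bC t : Fin r → ℚ)) = C.subtype '' (Set.range bC) := by
        rw [← Set.range_comp]; rfl
      rw [h1, ← Submodule.map_span, bC.span_eq, Submodule.map_subtype_top]
    rw [this]
    exact hC.sup_eq_top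
  -- the coerced family spans the real space
  have hFspanR : ∀ y : Fin r → ℝ,
      y ∈ Submodule.span ℝ (Set.range (fun s => (fun j => (F s j : ℝ)) : (Fin q ⊕ Fin dC) → (Fin r → ℝ))) := by
    have htop : Submodule.span ℝ (Set.range (fun s => (fun j => (F s j : ℝ)) : (Fin q ⊕ Fin dC) → (Fin r → ℝ))) = ⊤ := by
      rw [eq_top_iff, ← (Pi.basisFun ℝ (Fin r)).span_eq, Submodule.span_le]
      rintro _ ⟨j₀, rfl⟩
      have : (Pi.single j₀ (1:ℚ) : Fin r → ℚ) ∈ Submodule.span ℚ (Set.range F) := by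
        rw [hFspan]; trivial
      rw [Submodule.mem_span_range_iff_exists_fun ℚ] at this
      obtain ⟨dq, hdq⟩ := this
      have : (Pi.basisFun ℝ (Fin r)) j₀ = ∑ s, (dq s : ℝ) • (fun j => (F s j : ℝ)) := by
        funext j
        have := congrFun hdq j
        simp only [Finset.sum_apply, Pi.smul_apply, smul_eq_mul] at this ⊢
        rw [Pi.basisFun_apply]
        have h2 : ((Pi.single j₀ (1:ℚ) : Fin r → ℚ) j : ℝ) = (Pi.single j₀ (1:ℝ) : Fin r → ℝ) j := by
          by_cases h : j = j₀ <;> simp [Pi.single_apply, h]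
        rw [← h2, ← this]
        push_cast
        rfl
      rw [this]
      exact Submodule.sum_smul_mem _ _ (fun s _ => Submodule.subset_span ⟨s, rfl⟩)
    intro y; rw [htop]; exact Submodule.mem_top
  obtain ⟨α, hα⟩ := (Submodule.mem_span_range_iff_exists_fun ℝ).1 (hFspanR c)
  -- the images of the basis of C under gZ, coerced to ℝ, are independent
  have hindepQ : LinearIndependent ℚ (fun t => gZ (bC t : Fin r → ℚ)) := by
    have h1 : LinearIndependent ℚ (fun t => (bC t : Fin r → ℚ)) :=
      bC.linearIndependent.map' C.subtype C.ker_subtype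
    have h2 : Disjoint (Submodule.span ℚ (Set.range fun t => (bC t : Fin r → ℚ))) (LinearMap.ker gZ) := by
      have : Submodule.span ℚ (Set.range fun t => (bC t : Fin r → ℚ)) = C := by
        have h1' : (Set.range fun t => (bC t : Fin r → ℚ)) = C.subtype '' (Set.range bC) := by
          rw [← Set.range_comp]; rfl
        rw [h1', ← Submodule.map_span, bC.span_eq, Submodule.map_subtype_top]
      rw [this, ← hK]
      exact hC.disjoint.symm
    exact h1.map h2
  have hindepR := rat_indep_to_real _ hindepQ
  -- c is orthogonal to the Z-equations
  have hcK : ∀ i : {i : Fin k // i ∉ S}, ∑ j, c j * (m j i.val : ℝ) = 0 := fun i => hzero i.val i.prop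
  -- deduce that the C-part coefficients vanish
  have hα2 : ∀ t : Fin dC, α (Sum.inr t) = 0 := by
    have hrel : ∑ t, α (Sum.inr t) • (fun i : {i : Fin k // i ∉ S} => ((gZ (bC t : Fin r → ℚ)) i : ℝ)) = 0 := by
      funext i
      simp only [Finset.sum_apply, Pi.smul_apply, smul_eq_mul, Pi.zero_apply]
      have expand : ∀ s : Fin q ⊕ Fin dC, ((gZ (F s)) i : ℝ) = ∑ j, (F s j : ℝ) * (m j i.val : ℝ) := by
        intro s
        simp only [hgZ, LinearMap.coe_mk, AddHom.coe_mk]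
        push_cast
        rfl
      have hc0 : (0:ℝ) = ∑ s, α s * ((gZ (F s)) i : ℝ) := by
        have h3 : ∑ s, α s * ((gZ (F s)) i : ℝ) = ∑ j, c j * (m j i.val : ℝ) := by
          calc ∑ s, α s * ((gZ (F s)) i : ℝ)
              = ∑ s, α s * ∑ j, (F s j : ℝ) * (m j i.val : ℝ) := by
                congr 1; funext s; rw [expand s]
            _ = ∑ s, ∑ j, α s * ((F s j : ℝ) * (m j i.val : ℝ)) := by
                congr 1; funext s; rw [Finset.mul_sum]
            _ = ∑ j, ∑ s, α s * ((F s j : ℝ) * (m j i.val : ℝ)) := Finset.sum_comm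
            _ = ∑ j, c j * (m j i.val : ℝ) := by
                congr 1; funext j
                have hcj : c j = ∑ s, α s * (F s j : ℝ) := by
                  have := congrFun hα j
                  simp only [Finset.sum_apply, Pi.smul_apply, smul_eq_mul] at this
                  exact this.symm
                rw [hcj, Finset.sum_mul]
                congr 1; funext s; ring
        rw [h3, hcK i]
      -- split the sum over the two parts
      have hsplit : ∑ s : Fin q ⊕ Fin dC, α s * ((gZ (F s)) i : ℝ)
          = ∑ t : Fin q, α (Sum.inl t) * ((gZ (w t)) i : ℝ)
            + ∑ t : Fin dC, α (Sum.inr t) * ((gZ (bC t : Fin r → ℚ)) i : ℝ) := by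
        rw [Fintype.sum_sum_type]; rfl
      have hwK : ∀ t : Fin q, gZ (w t) = 0 := by
        intro t
        have : w t ∈ K := by
          rw [← hw]; exact Submodule.subset_span ⟨t, rfl⟩
        exact this
      rw [hsplit] at hc0
      simp only [hwK] at hc0
      simp only [Pi.zero_apply, Rat.cast_zero, mul_zero, Finset.sum_const_zero, zero_add] at hc0
      exact hc0.symm
    exact fun t => Fintype.linearIndependent_iff.1 hindepR _ hrel t
  -- so c is a real combination of the generators of K
  set α₁ : Fin q → ℝ := fun t => α (Sum.inl t) with hα₁
  have hcw : ∀ j, c j = ∑ t, α₁ t * (w t j : ℝ) := by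
    intro j
    have := congrFun hα j
    simp only [Finset.sum_apply, Pi.smul_apply, smul_eq_mul] at this
    rw [← this, Fintype.sum_sum_type]
    simp only [hα2, zero_mul, Finset.sum_const_zero, add_zero]
    rfl
  -- approximate the real coefficients by rationals
  set ρ : Fin q → Fin k → ℝ := fun t i => ∑ j, (w t j : ℝ) * (m j i : ℝ) with hρ
  have hxρ : ∀ i, x i = ∑ t, α₁ t * ρ t i := by
    intro i
    calc x i = ∑ j, c j * (m j i : ℝ) := rfl
      _ = ∑ j, (∑ t, α₁ t * (w t j : ℝ)) * (m j i : ℝ) := by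
          congr 1; funext j; rw [hcw j]
      _ = ∑ j, ∑ t, α₁ t * ((w t j : ℝ) * (m j i : ℝ)) := by
          congr 1; funext j; rw [Finset.sum_mul]; congr 1; funext t; ring
      _ = ∑ t, ∑ j, α₁ t * ((w t j : ℝ) * (m j i : ℝ)) := Finset.sum_comm
      _ = ∑ t, α₁ t * ρ t i := by
          congr 1; funext t; rw [hρ, Finset.mul_sum]
  have hβex : ∀ (n : ℕ) (t : Fin q), ∃ qq : ℚ, |α₁ t - qq| < 1/(n+1) := by
    intro n t
    exact exists_rat_near _ (by positivity)
  choose β hβ using hβex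
  have htends : ∀ t, Filter.Tendsto (fun n => (β n t : ℝ)) Filter.atTop (nhds (α₁ t)) := by
    intro t
    rw [tendsto_iff_norm_sub_tendsto_zero]
    apply squeeze_zero (fun n => norm_nonneg _) (fun n => le_of_lt (by
      rw [Real.norm_eq_abs, abs_sub_comm]; exact hβ n t))
    exact tendsto_one_div_add_atTop_nhds_zero_nat
  have hGt : ∀ i, Filter.Tendsto (fun n => ∑ t, (β n t : ℝ) * ρ t i) Filter.atTop (nhds (x i)) := by
    intro i
    rw [hxρ i]
    exact tendsto_finset_sum _ (fun t _ => (htends t).mul_const _)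
  have hev : ∀ᶠ n in Filter.atTop, ∀ i, i ∈ S → 0 < ∑ t, (β n t : ℝ) * ρ t i := by
    rw [Filter.eventually_all]
    intro i
    by_cases hiS : i ∈ S
    · have hpos : 0 < x i := by
        have := hiS; rw [hSdef, Finset.mem_filter] at this; exact this.2
      filter_upwards [(hGt i).eventually (eventually_gt_nhds hpos)] with n hn _
      exact hn
    · filter_upwards with n hn; exact absurd hn hiS
  obtain ⟨n, hn⟩ := hev.exists
  set d : Fin r → ℚ := fun j => ∑ t, β n t * w t j with hd
  have hdK : d ∈ K := by
    have : d = ∑ t, β n t • w t := by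
      funext j; simp [hd, Finset.sum_apply]
    rw [this]
    exact Submodule.sum_smul_mem _ _ (fun t _ => by rw [← hw]; exact Submodule.subset_span ⟨t, rfl⟩)
  set Y : Fin k → ℚ := fun i => ∑ j, d j * ((m j i : ℤ) : ℚ) with hY
  have hYcast : ∀ i, (Y i : ℝ) = ∑ t, (β n t : ℝ) * ρ t i := by
    intro i
    simp only [hY, hd]
    push_cast
    calc ∑ j, (∑ t, (β n t:ℝ) * (w t j:ℝ)) * (m j i : ℝ)
        = ∑ j, ∑ t, (β n t:ℝ) * ((w t j:ℝ) * (m j i : ℝ)) := by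
          congr 1; funext j; rw [Finset.sum_mul]; congr 1; funext t; ring
      _ = ∑ t, ∑ j, (β n t:ℝ) * ((w t j:ℝ) * (m j i : ℝ)) := Finset.sum_comm
      _ = ∑ t, (β n t : ℝ) * ρ t i := by
          congr 1; funext t; rw [hρ, Finset.mul_sum]
  have hYzero : ∀ i, i ∉ S → Y i = 0 := by
    intro i hi
    have := congrFun (LinearMap.mem_ker.1 hdK) ⟨i, hi⟩
    simpa [hgZ, hY] using this
  have hYpos : ∀ i, i ∈ S → 0 < Y i := by
    intro i hi
    have : (0:ℝ) < (Y i : ℝ) := by rw [hYcast i]; exact hn i hi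
    exact_mod_cast this
  have hYnn : ∀ i, 0 ≤ ∑ j, d j * ((m j i : ℤ) : ℚ) := by
    intro i
    by_cases hiS : i ∈ S
    · exact le_of_lt (hYpos i hiS)
    · rw [show ∑ j, d j * ((m j i : ℤ) : ℚ) = Y i from rfl, hYzero i hiS]
  have := rat_nonneg_step m hM d hYnn i₀
  have h0 : Y i₀ = 0 := this
  exact absurd h0 (ne_of_gt (hYpos i₀ hi₀S))



lemma posOrth {k r : ℕ} (m : Fin r → (Fin k → ℤ))
    (hM : ∀ e : Fin r → ℤ, (∀ i, 0 ≤ ∑ j, e j * m j i) → ∀ i, ∑ j, e j * m j i = 0) :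
    ∃ u : Fin k → ℝ, (∀ i, 0 < u i) ∧ ∀ j, ∑ i, u i * (m j i : ℝ) = 0 := by
  classical
  rcases Nat.eq_zero_or_pos k with hk | hk
  · subst hk
    exact ⟨fun i => 1, fun i => absurd i.2 (by omega), fun j => by simp⟩
  set mR : Fin r → (Fin k → ℝ) := fun j => fun i => (m j i : ℝ) with hmR
  set V : Submodule ℝ (Fin k → ℝ) := Submodule.span ℝ (Set.range mR) with hV
  haveI : FiniteDimensional ℝ V := FiniteDimensional.span_of_finite ℝ (Set.finite_range mR)
  have hVclosed : IsClosed (V : Set (Fin k → ℝ)) := Submodule.closed_of_finiteDimensional V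
  set Δ : Set (Fin k → ℝ) := convexHull ℝ (Set.range (fun i : Fin k => (Pi.single i 1 : Fin k → ℝ))) with hΔ
  have hΔsub : Δ ⊆ {y : Fin k → ℝ | (∀ i, 0 ≤ y i) ∧ ∑ i, y i = 1} := by
    rw [hΔ]
    apply convexHull_min
    · rintro _ ⟨i, rfl⟩
      constructor
      · intro i'; by_cases h : i' = i <;> simp [Pi.single_apply, h]
      · simp
    · rintro y ⟨hy1, hy2⟩ z ⟨hz1, hz2⟩ a b ha hb hab
      constructor
      · intro i
        have := hy1 i; have := hz1 i
        simp only [Pi.add_apply, Pi.smul_apply, smul_eq_mul]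
        positivity
      · simp only [Pi.add_apply, Pi.smul_apply, smul_eq_mul, Finset.sum_add_distrib,
          ← Finset.mul_sum, hy2, hz2, mul_one]
        exact hab
  -- V ∩ Δ = ∅
  have hdisj : Disjoint (V : Set (Fin k → ℝ)) Δ := by
    rw [Set.disjoint_left]
    intro y hyV hyΔ
    obtain ⟨hy1, hy2⟩ := hΔsub hyΔ
    obtain ⟨cc, hcc⟩ := (Submodule.mem_span_range_iff_exists_fun ℝ).1 hyV
    have hyform : ∀ i, y i = ∑ j, cc j * (m j i : ℝ) := by
      intro i
      rw [← hcc]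
      simp [Finset.sum_apply, hmR]
    have hznn : ∀ i, 0 ≤ ∑ j, cc j * (m j i : ℝ) := fun i => (hyform i) ▸ hy1 i
    have := real_nonneg_step m hM cc hznn
    have hy0 : ∀ i, y i = 0 := fun i => by rw [hyform i, this i]
    rw [Finset.sum_congr rfl (fun i _ => hy0 i)] at hy2
    simp at hy2
  have hΔconv : Convex ℝ Δ := convex_convexHull ℝ _
  have hΔcomp : IsCompact Δ := (Set.finite_range _).isCompact_convexHull ℝ
  obtain ⟨f, u0, v0, hfV, huv, hfΔ⟩ :=
    geometric_hahn_banach_closed_compact (V.convex) hVclosed hΔconv hΔcomp hdisj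
  have hu0pos : 0 < u0 := by
    have := hfV 0 (Submodule.zero_mem V)
    simpa using this
  have hfzero : ∀ y ∈ V, f y = 0 := by
    intro y hy
    by_contra hne
    have h2 : ((2 * u0) / f y) • y ∈ V := Submodule.smul_mem V _ hy
    have := hfV _ h2
    rw [map_smul] at this
    simp only [smul_eq_mul] at this
    rw [div_mul_cancel₀ _ hne] at this
    linarith
  refine ⟨fun i => f (Pi.single i 1), fun i => ?_, fun j => ?_⟩
  · have : v0 < f (Pi.single i 1) := hfΔ _ (subset_convexHull ℝ _ ⟨i, rfl⟩)
    linarith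
  · have hmem : mR j ∈ V := Submodule.subset_span ⟨j, rfl⟩
    have hexp : mR j = ∑ i, (m j i : ℝ) • (Pi.single i 1 : Fin k → ℝ) := by
      funext i'
      simp only [Finset.sum_apply, Pi.smul_apply, smul_eq_mul, hmR]
      rw [Finset.sum_eq_single i']
      · simp
      · intro b _ hb; simp [Pi.single_apply, Ne.symm hb]
      · intro h; simp at h
    have := hfzero _ hmem
    rw [hexp] at this
    rw [map_sum] at this
    simp only [map_smul, smul_eq_mul] at this
    rw [← this]
    congr 1; funext i; ring


lemma units_divisible (c : ℂˣ) (n : ℤ) (hn : n ≠ 0) : ∃ b : ℂˣ, b ^ n = c := by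
  have hpos : 0 < n.natAbs := Int.natAbs_pos.2 hn
  obtain ⟨z, hz⟩ := IsAlgClosed.exists_pow_nat_eq (c : ℂ) hpos
  have hz0 : z ≠ 0 := by
    intro h
    rw [h, zero_pow hpos.ne'] at hz
    exact c.ne_zero hz.symm
  have hbn : (Units.mk0 z hz0) ^ (n.natAbs) = c := by
    apply Units.ext
    push_cast
    exact hz
  rcases Int.natAbs_eq n with h | h
  · exact ⟨Units.mk0 z hz0, by rw [h, zpow_natCast, hbn]⟩
  · refine ⟨(Units.mk0 z hz0)⁻¹, ?_⟩
    rw [h, zpow_neg, ← inv_zpow, inv_inv, zpow_natCast, hbn]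

lemma addunits_injective : Module.Injective ℤ (Additive ℂˣ) := by
  apply Module.Baer.injective
  intro I g
  obtain ⟨n, hn⟩ : ∃ n : ℤ, I = Ideal.span {n} := ⟨_, (I.span_singleton_generator).symm⟩
  by_cases hn0 : n = 0
  · refine ⟨0, ?_⟩
    intro x mem
    have : x = 0 := by
      rw [hn, hn0, Ideal.span_singleton_eq_bot.2 rfl] at mem
      simpa using mem
    subst this
    have : (⟨(0:ℤ), mem⟩ : I) = 0 := by ext; rfl
    rw [this, map_zero, map_zero]
  · have hnI : n ∈ I := by rw [hn]; exact Ideal.subset_span rfl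
    obtain ⟨b, hb⟩ := units_divisible (g ⟨n, hnI⟩).toMul n hn0
    set a : Additive ℂˣ := Additive.ofMul b with ha
    have hna : n • a = g ⟨n, hnI⟩ := by
      rw [ha]
      apply Additive.toMul.injective
      rw [toMul_zsmul]
      simpa using hb
    refine ⟨LinearMap.toSpanSingleton ℤ _ a, ?_⟩
    intro x mem
    obtain ⟨mm, hmm⟩ := Ideal.mem_span_singleton'.1 (by rw [← hn]; exact mem)
    have hx : (⟨x, mem⟩ : I) = mm • (⟨n, hnI⟩ : I) := by
      ext; simp [← hmm, smul_eq_mul]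
    rw [hx, map_smul, ← hna, LinearMap.toSpanSingleton_apply, ← hmm]
    rw [mul_smul, smul_comm]

lemma aux_easy
    (k l : ℕ) (L : AddSubgroup ((Fin k → ℤ) × (Fin l → ℤ)))
    (φ : L → ℂˣ)
    (p : (Fin k → ℂ) × (Fin l → ℂ))
    (hpc : p ∈ closure (torusVar k l L φ)) (hp1 : p.1 = 0) (hp2 : ∀ j, p.2 j ≠ 0) :
    p ∈ deltaVar k l L φ := by
  refine ⟨hp1, hp2, ?_⟩
  intro v hv1
  set f : (Fin k → ℂ) × (Fin l → ℂ) → ℂ :=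
    fun q => ∏ j, q.2 j ^ ((v : (Fin k → ℤ) × (Fin l → ℤ)).2 j) with hf
  have hcont : ContinuousAt f p := by
    have hstep : ∀ j ∈ Finset.univ, Filter.Tendsto
        (fun q : (Fin k → ℂ) × (Fin l → ℂ) => q.2 j ^ ((v : (Fin k → ℤ) × (Fin l → ℤ)).2 j))
        (nhds p) (nhds (p.2 j ^ ((v : (Fin k → ℤ) × (Fin l → ℤ)).2 j))) := by
      intro j _
      have h1 : ContinuousAt (fun q : (Fin k → ℂ) × (Fin l → ℂ) => q.2 j) p :=
        ((continuous_apply j).comp continuous_snd).continuousAt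
      have h2 := continuousAt_zpow₀ (p.2 j) ((v : (Fin k → ℤ) × (Fin l → ℤ)).2 j)
        (Or.inl (hp2 j))
      have h3 : ContinuousAt
          (fun q : (Fin k → ℂ) × (Fin l → ℂ) =>
            q.2 j ^ ((v : (Fin k → ℤ) × (Fin l → ℤ)).2 j)) p := Filter.Tendsto.comp h2 h1
      exact h3
    exact tendsto_finset_prod Finset.univ hstep
  have hT : ∀ q ∈ torusVar k l L φ, f q = (φ v : ℂ) := by
    intro q hq
    have heq := hq.2.2 v
    have h0 : ∀ i, ((v : (Fin k → ℤ) × (Fin l → ℤ)).1 i) = 0 := fun i => congrFun hv1 i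
    rw [Finset.prod_congr rfl (fun i _ => by rw [h0 i, zpow_zero])] at heq
    simpa using heq
  have himg : f p ∈ closure (f '' (torusVar k l L φ)) :=
    hcont.continuousWithinAt.mem_closure_image hpc
  have hsub : f '' (torusVar k l L φ) ⊆ {(φ v : ℂ)} := by
    rintro _ ⟨q, hq, rfl⟩; exact hT q hq
  have : f p ∈ ({(φ v : ℂ)} : Set ℂ) := by
    have h2 := closure_mono hsub himg
    rwa [IsClosed.closure_eq isClosed_singleton] at h2
  simpa [hf] using this

set_option maxHeartbeats 1000000 in
lemma aux_hard
    (k l : ℕ) (L : AddSubgroup ((Fin k → ℤ) × (Fin l → ℤ)))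
    (φ : L → ℂˣ) (hφ : ∀ x y : L, φ (x + y) = φ x * φ y)
    (hLC : ∀ v : L, (∀ i, 0 ≤ (v : (Fin k → ℤ) × (Fin l → ℤ)).1 i) →
      (v : (Fin k → ℤ) × (Fin l → ℤ)).1 = 0)
    (p : (Fin k → ℂ) × (Fin l → ℂ))
    (hp1 : p.1 = 0) (hp2 : ∀ j, p.2 j ≠ 0)
    (hp3 : ∀ v : L, (v : (Fin k → ℤ) × (Fin l → ℤ)).1 = 0 →
      (∏ j, p.2 j ^ ((v : (Fin k → ℤ) × (Fin l → ℤ)).2 j)) = (φ v : ℂ)) :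
    p ∈ closure (torusVar k l L φ) := by
  classical
  set L' : Submodule ℤ ((Fin k → ℤ) × (Fin l → ℤ)) := AddSubgroup.toIntSubmodule L with hL'
  have hmemL : ∀ y : (Fin k → ℤ) × (Fin l → ℤ), y ∈ L' → y ∈ L := by
    intro y hy; have := AddSubgroup.coe_toIntSubmodule L
    rw [hL'] at hy
    rw [← SetLike.mem_coe, this] at hy
    exact hy
  have hmemL' : ∀ y : (Fin k → ℤ) × (Fin l → ℤ), y ∈ L → y ∈ L' := by
    intro y hy; rw [hL', ← SetLike.mem_coe, AddSubgroup.coe_toIntSubmodule]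
    exact hy
  -- generators
  obtain ⟨r, vg, hvg⟩ := Submodule.fg_iff_exists_fin_generating_family.1 (IsNoetherian.noetherian L')
  set m : Fin r → Fin k → ℤ := fun j => (vg j).1 with hm
  have hMstep : ∀ e : Fin r → ℤ, (∀ i, 0 ≤ ∑ j, e j * m j i) → ∀ i, ∑ j, e j * m j i = 0 := by
    intro e he
    set V₀ : (Fin k → ℤ) × (Fin l → ℤ) := ∑ j, e j • vg j with hV₀
    have hV₀L' : V₀ ∈ L' := by
      rw [← hvg]
      exact Submodule.sum_mem _ (fun j _ => Submodule.smul_mem _ _ (Submodule.subset_span ⟨j, rfl⟩))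
    have hfst : ∀ i, V₀.1 i = ∑ j, e j * m j i := by
      intro i
      rw [hV₀]
      rw [Prod.fst_sum]
      rw [Finset.sum_apply]
      congr 1
    have h1 := hLC ⟨V₀, hmemL _ hV₀L'⟩ (fun i => by rw [hfst i]; exact he i)
    intro i
    have := congrFun h1 i
    rw [hfst i] at this
    exact this
  obtain ⟨u, hupos, huorth⟩ := posOrth m hMstep
  -- orthogonality for all elements of L'
  have huL : ∀ y ∈ L', ∑ i, u i * ((y.1 i : ℤ) : ℝ) = 0 := by
    intro y hy
    rw [← hvg] at hy
    induction hy using Submodule.span_induction with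
    | mem z hz =>
        obtain ⟨j, rfl⟩ := hz
        exact huorth j
    | zero => simp
    | add a b _ _ ha hb =>
        have : ∀ i, ((a + b).1 i : ℝ) = (a.1 i : ℝ) + (b.1 i : ℝ) := by
          intro i; rw [Prod.fst_add, Pi.add_apply]; push_cast; ring
        rw [Finset.sum_congr rfl (fun i _ => by rw [this i, mul_add])]
        rw [Finset.sum_add_distrib, ha, hb, add_zero]
    | smul c a _ ha =>
        have : ∀ i, ((c • a).1 i : ℝ) = (c : ℝ) * (a.1 i : ℝ) := by
          intro i; rw [Prod.smul_fst, Pi.smul_apply, smul_eq_mul]; push_cast; ring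
        rw [Finset.sum_congr rfl (fun i _ => by rw [this i])]
        calc ∑ i, u i * ((c:ℝ) * (a.1 i : ℝ)) = (c:ℝ) * ∑ i, u i * (a.1 i : ℝ) := by
              rw [Finset.mul_sum]; congr 1; funext i; ring
          _ = 0 := by rw [ha, mul_zero]
  -- units of the second block
  set W : Fin l → ℂˣ := fun j => Units.mk0 (p.2 j) (hp2 j) with hW
  set WB : ((Fin k → ℤ) × (Fin l → ℤ)) → ℂˣ := fun y => ∏ j, W j ^ (y.2 j) with hWB
  have hWBadd : ∀ y z, WB (y + z) = WB y * WB z := by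
    intro y z
    rw [hWB]
    simp only
    rw [← Finset.prod_mul_distrib]
    congr 1; funext j
    rw [Prod.snd_add, Pi.add_apply, zpow_add]
  have hWBcoe : ∀ y, ((WB y : ℂˣ) : ℂ) = ∏ j, p.2 j ^ (y.2 j) := by
    intro y
    rw [hWB]
    simp only
    have hcoe : ((∏ j, W j ^ y.2 j : ℂˣ) : ℂ) = (Units.coeHom ℂ) (∏ j, W j ^ y.2 j) := rfl
    rw [hcoe, map_prod]
    congr 1; funext j
    rw [Units.coeHom_apply, Units.val_zpow_eq_zpow_val, hW]
    rfl
  have hφone : φ 0 = 1 := by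
    have := hφ 0 0
    rw [add_zero] at this
    exact (mul_eq_left.1 this.symm)
  -- the character ψ on L'
  set ψ₀ : ↥L' →+ Additive ℂˣ :=
    { toFun := fun y => Additive.ofMul (φ ⟨y.1, hmemL _ y.2⟩ * (WB y.1)⁻¹)
      map_zero' := by
        have h1 : (⟨((0 : ↥L' ) : (Fin k → ℤ) × (Fin l → ℤ)), hmemL _ (0 : ↥L').2⟩ : ↥L) = 0 := by
          apply Subtype.ext; rfl
        simp only [h1, hφone]
        have h2 : WB ((0 : ↥L' ) : (Fin k → ℤ) × (Fin l → ℤ)) = 1 := by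
          rw [hWB]; simp
        rw [h2]
        simp
      map_add' := by
        intro a b
        have h1 : (⟨((a + b : ↥L' ) : (Fin k → ℤ) × (Fin l → ℤ)), hmemL _ (a+b).2⟩ : ↥L)
            = ⟨(a : (Fin k → ℤ) × (Fin l → ℤ)), hmemL _ a.2⟩ + ⟨(b : (Fin k → ℤ) × (Fin l → ℤ)), hmemL _ b.2⟩ := by
          apply Subtype.ext; rfl
        simp only [h1, hφ]
        have h2 : ((a + b : ↥L') : (Fin k → ℤ) × (Fin l → ℤ))
            = (a : (Fin k → ℤ) × (Fin l → ℤ)) + (b : (Fin k → ℤ) × (Fin l → ℤ)) := rfl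
        rw [h2, hWBadd]
        rw [← ofMul_mul]
        congr 1
        rw [mul_inv]
        exact mul_mul_mul_comm _ _ _ _
    } with hψ₀
  set ψ : ↥L' →ₗ[ℤ] Additive ℂˣ := ψ₀.toIntLinearMap with hψ
  set proj : ↥L' →ₗ[ℤ] (Fin k → ℤ) := (LinearMap.fst ℤ _ _).comp L'.subtype with hproj
  have hker : LinearMap.ker proj ≤ LinearMap.ker ψ := by
    intro y hy
    rw [LinearMap.mem_ker] at hy ⊢
    have hy1 : (y : (Fin k → ℤ) × (Fin l → ℤ)).1 = 0 := hy
    have hWy : WB (y : (Fin k → ℤ) × (Fin l → ℤ)) = φ ⟨y.1, hmemL _ y.2⟩ := by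
      apply Units.ext
      rw [hWBcoe]
      exact hp3 ⟨y.1, hmemL _ y.2⟩ hy1
    show Additive.ofMul (φ ⟨y.1, hmemL _ y.2⟩ * (WB y.1)⁻¹) = 0
    rw [hWy]
    simp
  set χ : ↥(LinearMap.range proj) →ₗ[ℤ] Additive ℂˣ :=
    ((LinearMap.ker proj).liftQ ψ hker).comp (proj.quotKerEquivRange).symm.toLinearMap with hχ
  obtain ⟨g, hg⟩ := addunits_injective.out (LinearMap.range proj).subtype
    (Submodule.injective_subtype _) χ
  have hgproj : ∀ y : ↥L', g (proj y) = ψ y := by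
    intro y
    have h1 : (LinearMap.range proj).subtype ⟨proj y, LinearMap.mem_range_self proj y⟩ = proj y := rfl
    rw [← h1, hg]
    rw [hχ, LinearMap.comp_apply]
    have h2 : (proj.quotKerEquivRange).symm ⟨proj y, LinearMap.mem_range_self proj y⟩
        = (LinearMap.ker proj).mkQ y :=
      proj.quotKerEquivRange_symm_apply_image y (LinearMap.mem_range_self proj y)
    rw [LinearEquiv.coe_coe, h2, Submodule.mkQ_apply, Submodule.liftQ_apply]
  set z1 : Fin k → ℂˣ := fun i => Additive.toMul (g (Pi.single i 1)) with hz1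
  have hz1prod : ∀ a : Fin k → ℤ, ∏ i, (z1 i) ^ (a i) = Additive.toMul (g a) := by
    intro a
    have ha : a = ∑ i, a i • (Pi.single i (1:ℤ) : Fin k → ℤ) := by
      funext i'
      simp [Finset.sum_apply, Pi.single_apply, Finset.sum_ite_eq', mul_comm]
    conv_rhs => rw [ha]
    rw [map_sum, toMul_sum]
    congr 1; funext i
    rw [map_smul, toMul_zsmul, hz1]
  have hgy : ∀ (y : (Fin k → ℤ) × (Fin l → ℤ)) (hy : y ∈ L'),
      Additive.toMul (g y.1) = φ ⟨y, hmemL _ hy⟩ * (WB y)⁻¹ := by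
    intro y hy
    have h1 := hgproj ⟨y, hy⟩
    have h2 : proj ⟨y, hy⟩ = y.1 := rfl
    rw [h2] at h1
    have h3 : ψ ⟨y, hy⟩ = Additive.ofMul (φ ⟨y, hmemL _ hy⟩ * (WB y)⁻¹) := rfl
    rw [h1, h3]
    rfl
  -- the approximating sequence
  set P : ℕ → (Fin k → ℂ) × (Fin l → ℂ) := fun n =>
    (fun i => Complex.exp (-(n : ℂ) * (u i : ℝ)) * ((z1 i : ℂˣ) : ℂ), p.2) with hP
  have hPmem : ∀ n, P n ∈ torusVar k l L φ := by
    intro n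
    refine ⟨fun i => mul_ne_zero (Complex.exp_ne_zero _) (z1 i).ne_zero, hp2, ?_⟩
    rintro ⟨y, hyL⟩
    have hyL' : y ∈ L' := hmemL' y hyL
    have hsplit : ∏ i, ((Complex.exp (-(n : ℂ) * (u i : ℝ)) * ((z1 i : ℂˣ) : ℂ)) ^ (y.1 i))
        = (∏ i, Complex.exp (-(n : ℂ) * (u i : ℝ)) ^ (y.1 i)) * ∏ i, ((z1 i : ℂˣ) : ℂ) ^ (y.1 i) := by
      rw [← Finset.prod_mul_distrib]; congr 1; funext i; rw [mul_zpow]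
    have hexp1 : ∏ i, Complex.exp (-(n : ℂ) * (u i : ℝ)) ^ (y.1 i) = 1 := by
      have hstep : ∀ i, Complex.exp (-(n : ℂ) * (u i : ℝ)) ^ (y.1 i)
          = Complex.exp ((y.1 i) * (-(n : ℂ) * (u i : ℝ))) := fun i => (Complex.exp_int_mul _ _).symm
      rw [Finset.prod_congr rfl (fun i _ => hstep i), ← Complex.exp_sum]
      have hsum : ∑ i, ((y.1 i : ℂ) * (-(n : ℂ) * ((u i : ℝ) : ℂ))) = 0 := by
        have hreal := huL y hyL'
        have hcast : ∑ i, ((y.1 i : ℂ) * (-(n : ℂ) * ((u i : ℝ) : ℂ)))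
            = -(n:ℂ) * (((∑ i, u i * (y.1 i : ℝ)) : ℝ) : ℂ) := by
          push_cast
          rw [Finset.mul_sum]
          congr 1; funext i; ring
        rw [hcast, hreal]
        simp
      rw [hsum, Complex.exp_zero]
    have hz1part : ∏ i, ((z1 i : ℂˣ) : ℂ) ^ (y.1 i)
        = (((φ ⟨y, hyL⟩ * (WB y)⁻¹ : ℂˣ)) : ℂ) := by
      have h4 := hz1prod y.1
      have h5 : ((∏ i, (z1 i) ^ (y.1 i) : ℂˣ) : ℂ) = ∏ i, ((z1 i : ℂˣ) : ℂ) ^ (y.1 i) := by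
        have hcoe : ((∏ i, (z1 i) ^ (y.1 i) : ℂˣ) : ℂ)
            = (Units.coeHom ℂ) (∏ i, (z1 i) ^ (y.1 i)) := rfl
        rw [hcoe, map_prod]
        congr 1; funext i
        rw [Units.coeHom_apply, Units.val_zpow_eq_zpow_val]
      rw [← h5, h4]
      congr 1
      exact hgy y hyL'
    show (∏ i, ((P n).1 i) ^ (y.1 i)) * (∏ j, ((P n).2 j) ^ (y.2 j)) = ((φ ⟨y, hyL⟩ : ℂˣ) : ℂ)
    have hsnd : ∏ j, ((P n).2 j) ^ (y.2 j) = ((WB y : ℂˣ) : ℂ) :=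
      (hWBcoe y).symm
    have hfst : ∏ i, ((P n).1 i) ^ (y.1 i)
        = (((φ ⟨y, hyL⟩ * (WB y)⁻¹ : ℂˣ)) : ℂ) := by
      rw [hP]
      simp only
      rw [hsplit, hexp1, one_mul, hz1part]
    rw [hfst, hsnd, ← Units.val_mul]
    congr 1
    rw [inv_mul_cancel_right]
  have htend : Filter.Tendsto P Filter.atTop (nhds p) := by
    have h1 : Filter.Tendsto (fun n : ℕ => (P n).1) Filter.atTop (nhds p.1) := by
      rw [tendsto_pi_nhds]
      intro i
      rw [hp1]
      show Filter.Tendsto (fun n : ℕ => (P n).1 i) Filter.atTop (nhds ((0 : Fin k → ℂ) i))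
      rw [Pi.zero_apply]
      apply squeeze_zero_norm (a := fun n : ℕ => Real.exp (-((n:ℝ) * u i)) * ‖((z1 i : ℂˣ) : ℂ)‖)
      · intro n
        show ‖Complex.exp (-(n : ℂ) * (u i : ℝ)) * ((z1 i : ℂˣ) : ℂ)‖ ≤ _
        rw [norm_mul]
        have hnorm : ‖Complex.exp (-(n : ℂ) * ((u i : ℝ) : ℂ))‖ = Real.exp (-((n:ℝ) * u i)) := by
          rw [Complex.norm_exp]
          congr 1
          have : (-(n : ℂ) * ((u i : ℝ) : ℂ)) = (((-((n:ℝ) * u i) : ℝ)) : ℂ) := by push_cast; ring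
          rw [this, Complex.ofReal_re]
        rw [hnorm]
      · have hmulat : Filter.Tendsto (fun n : ℕ => (n : ℝ) * u i) Filter.atTop Filter.atTop :=
          Filter.Tendsto.atTop_mul_const' (hupos i) tendsto_natCast_atTop_atTop
        have hnegat : Filter.Tendsto (fun n : ℕ => -((n : ℝ) * u i)) Filter.atTop Filter.atBot :=
          Filter.tendsto_neg_atTop_atBot.comp hmulat
        have hexp : Filter.Tendsto (fun n : ℕ => Real.exp (-((n:ℝ) * u i))) Filter.atTop (nhds 0) :=
          Real.tendsto_exp_atBot.comp hnegat
        have h6 := hexp.mul_const ‖((z1 i : ℂˣ) : ℂ)‖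
        rw [zero_mul] at h6
        exact h6
    have h2 : Filter.Tendsto (fun n : ℕ => (P n).2) Filter.atTop (nhds p.2) := by
      have : ∀ n : ℕ, (P n).2 = p.2 := fun n => rfl
      simp only [this]
      exact tendsto_const_nhds
    have h7 := h1.prodMk_nhds h2
    rw [Prod.mk.eta] at h7
    exact h7
  exact mem_closure_of_tendsto htend (Filter.Eventually.of_forall hPmem)


/-- If `L ∩ C ⊆ N`, the intersection of the closure of `T_{L,φ}` with
`Δ = {0} × (ℂ*)ˡ` is exactly `Δ_{L,φ}`. -/
theorem torus_closure_inter_boundary_eq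
    (k l : ℕ) (L : AddSubgroup ((Fin k → ℤ) × (Fin l → ℤ)))
    (hsat : ∀ (v : (Fin k → ℤ) × (Fin l → ℤ)) (m : ℤ), m ≠ 0 → m • v ∈ L → v ∈ L)
    (φ : L → ℂˣ) (hφ : ∀ x y : L, φ (x + y) = φ x * φ y)
    (hne : (torusVar k l L φ).Nonempty)
    (hLC : ∀ v : L, (∀ i, 0 ≤ (v : (Fin k → ℤ) × (Fin l → ℤ)).1 i) →
      (v : (Fin k → ℤ) × (Fin l → ℤ)).1 = 0) :
    {p ∈ closure (torusVar k l L φ) | p.1 = 0 ∧ ∀ j, p.2 j ≠ 0}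
      = deltaVar k l L φ := by
  ext p
  constructor
  · rintro ⟨hpc, hp1, hp2⟩
    exact aux_easy k l L φ p hpc hp1 hp2
  · rintro ⟨hp1, hp2, hp3⟩
    exact ⟨aux_hard k l L φ hφ hLC p hp1 hp2 hp3, hp1, hp2⟩
end

section
/- The expression R(x) = R_1(x)^{a_1} R_3(x)^{±1}, where on the line x_1 + x_2 + x_3 = 0 (normalized x_1 = 1, x_3 = −1 − x_2) the cross-ratios become rational functions of x_2, is not a constant function of x_2; concretely: the rational function in the single variable x_2 obtained by substituting x_1 = 1, x_3 = −1−x_2 into R_1^{a_1}R_2^{a_2}R_3^{a_3} with a_1 ≠ 0 is non-constant, because the linear factor (2x_2+1) appears in the denominator of R_1 and nowhere else. -/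
open Complex Filter Topology

/-- The cross-ratio `[z₁,z₂,z₃,z₄] = (z₁−z₃)(z₂−z₄)/((z₁−z₄)(z₂−z₃))`. -/
noncomputable def crossRatio (z1 z2 z3 z4 : ℂ) : ℂ :=
  ((z1 - z3) * (z2 - z4)) / ((z1 - z4) * (z2 - z3))

/-- With `ζ = e^{2πi/3}`, `x₁ = 1`, `x₂ = x`, `x₃ = −1−x`, `yᵢ = ζxᵢ`, the
rational function `R₁^{a₁}R₂^{a₂}R₃^{a₃}` of the variable `x` (with `a₁ ≠ 0`)
is not constant on its domain of definition. -/
theorem crossRatio_product_not_constant_on_line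
    (ζ : ℂ) (hζ : ζ = Complex.exp (2 * Real.pi * Complex.I / 3))
    (R₁ R₂ R₃ : ℂ → ℂ)
    (hR₁ : ∀ x, R₁ x = crossRatio x (ζ * x) (ζ * (-1 - x)) (-1 - x))
    (hR₂ : ∀ x, R₂ x = crossRatio (-1 - x) (ζ * (-1 - x)) (ζ * 1) 1)
    (hR₃ : ∀ x, R₃ x = crossRatio 1 (ζ * 1) (ζ * x) x)
    (D : ℂ → Prop)
    (hD : ∀ x, D x ↔
      ((x - (-1 - x)) * (ζ * x - ζ * (-1 - x)) ≠ 0 ∧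
       ((-1 - x) - 1) * (ζ * (-1 - x) - ζ * 1) ≠ 0 ∧
       (1 - x) * (ζ * 1 - ζ * x) ≠ 0 ∧
       R₁ x ≠ 0 ∧ R₂ x ≠ 0 ∧ R₃ x ≠ 0))
    (a₁ a₂ a₃ : ℤ) (ha₁ : a₁ ≠ 0) :
    ¬ ∃ c : ℂ, ∀ x : ℂ, D x → (R₁ x) ^ a₁ * (R₂ x) ^ a₂ * (R₃ x) ^ a₃ = c := by
  rintro ⟨c, hc⟩
  -- basic facts about ζ
  have hq : Real.sqrt 3 ^ 2 = 3 := Real.sq_sqrt (by norm_num)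
  have hs0 : (0:ℝ) < Real.sqrt 3 := Real.sqrt_pos.mpr (by norm_num)
  have hζI : ζ = Complex.exp (((2 * Real.pi / 3 : ℝ) : ℂ) * Complex.I) := by
    rw [hζ]; push_cast; ring_nf
  have hangle : (2 * Real.pi / 3 : ℝ) = Real.pi - Real.pi / 3 := by ring
  have hzre : ζ.re = -(1/2) := by
    rw [hζI, Complex.exp_ofReal_mul_I_re, hangle, Real.cos_pi_sub,
      Real.cos_pi_div_three]
  have hzim : ζ.im = Real.sqrt 3 / 2 := by
    rw [hζI, Complex.exp_ofReal_mul_I_im, hangle, Real.sin_pi_sub,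
      Real.sin_pi_div_three]
  have hζ0 : ζ ≠ 0 := by
    intro h
    rw [Complex.ext_iff] at h
    simp [hzim] at h
  -- nonvanishing of the numerator factors at real points
  have n1a : ∀ t : ℝ, (t : ℂ) - ζ * (-1 - (t:ℂ)) ≠ 0 := by
    intro t h
    rw [Complex.ext_iff] at h
    simp [hzre, hzim] at h
    obtain ⟨h1, h2⟩ := h
    nlinarith [h1, h2, hs0, hq]
  have n1b : ∀ t : ℝ, ζ * (t : ℂ) - (-1 - (t:ℂ)) ≠ 0 := by
    intro t h
    rw [Complex.ext_iff] at h
    simp [hzre, hzim] at h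
    obtain ⟨h1, h2⟩ := h
    nlinarith [h1, h2, hs0, hq]
  have n2a : ∀ t : ℝ, (-1 - (t:ℂ)) - ζ * 1 ≠ 0 := by
    intro t h
    rw [Complex.ext_iff] at h
    simp [hzre, hzim] at h
  have n2b : ∀ t : ℝ, ζ * (-1 - (t:ℂ)) - 1 ≠ 0 := by
    intro t h
    rw [Complex.ext_iff] at h
    simp [hzre, hzim] at h
    obtain ⟨h1, h2⟩ := h
    nlinarith [h1, h2, hs0, hq]
  have n3a : ∀ t : ℝ, (1 : ℂ) - ζ * (t:ℂ) ≠ 0 := by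
    intro t h
    rw [Complex.ext_iff] at h
    simp [hzre, hzim] at h
    obtain ⟨h1, h2⟩ := h
    nlinarith [h1, h2, hs0, hq]
  have n3b : ∀ t : ℝ, ζ * 1 - (t:ℂ) ≠ 0 := by
    intro t h
    rw [Complex.ext_iff] at h
    simp [hzre, hzim] at h
  -- real points away from -1/2, -2, 1 are in the domain
  have hDreal : ∀ t : ℝ, t ≠ -1/2 → t ≠ -2 → t ≠ 1 → D (t : ℂ) := by
    intro t h1 h2 h3
    have e1r : (2*t+1 : ℝ) ≠ 0 := by intro h; apply h1; linarith
    have e1 : ((2*t+1 : ℝ) : ℂ) ≠ 0 := by exact_mod_cast e1r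
    have e2r : (-(t+2) : ℝ) ≠ 0 := by intro h; apply h2; linarith
    have e2 : ((-(t+2) : ℝ) : ℂ) ≠ 0 := by exact_mod_cast e2r
    have e3r : (1 - t : ℝ) ≠ 0 := by intro h; apply h3; linarith
    have e3 : ((1 - t : ℝ) : ℂ) ≠ 0 := by exact_mod_cast e3r
    have d1 : ((t:ℂ) - (-1 - (t:ℂ))) * (ζ * (t:ℂ) - ζ * (-1 - (t:ℂ))) ≠ 0 := by
      have a : (t:ℂ) - (-1 - (t:ℂ)) = ((2*t+1 : ℝ) : ℂ) := by push_cast; ring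
      have b : ζ * (t:ℂ) - ζ * (-1 - (t:ℂ)) = ζ * ((2*t+1 : ℝ) : ℂ) := by push_cast; ring
      rw [a, b]
      exact mul_ne_zero e1 (mul_ne_zero hζ0 e1)
    have d2 : ((-1 - (t:ℂ)) - 1) * (ζ * (-1 - (t:ℂ)) - ζ * 1) ≠ 0 := by
      have a : (-1 - (t:ℂ)) - 1 = ((-(t+2) : ℝ) : ℂ) := by push_cast; ring
      have b : ζ * (-1 - (t:ℂ)) - ζ * 1 = ζ * ((-(t+2) : ℝ) : ℂ) := by push_cast; ring
      rw [a, b]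
      exact mul_ne_zero e2 (mul_ne_zero hζ0 e2)
    have d3 : ((1:ℂ) - (t:ℂ)) * (ζ * 1 - ζ * (t:ℂ)) ≠ 0 := by
      have a : (1:ℂ) - (t:ℂ) = ((1 - t : ℝ) : ℂ) := by push_cast; ring
      have b : ζ * 1 - ζ * (t:ℂ) = ζ * ((1 - t : ℝ) : ℂ) := by push_cast; ring
      rw [a, b]
      exact mul_ne_zero e3 (mul_ne_zero hζ0 e3)
    rw [hD]
    refine ⟨d1, d2, d3, ?_, ?_, ?_⟩
    · rw [hR₁, crossRatio]
      exact div_ne_zero (mul_ne_zero (n1a t) (n1b t)) d1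
    · rw [hR₂, crossRatio]
      exact div_ne_zero (mul_ne_zero (n2a t) (n2b t)) d2
    · rw [hR₃, crossRatio]
      exact div_ne_zero (mul_ne_zero (n3a t) (n3b t)) d3
  -- the key claim, for a positive first exponent
  have key : ∀ (b₁ b₂ b₃ : ℤ), 0 < b₁ → ∀ c' : ℂ,
      (∀ x, D x → R₁ x ^ b₁ * R₂ x ^ b₂ * R₃ x ^ b₃ = c') → False := by
    intro b₁ b₂ b₃ hb c' hcc
    set w : ℂ := ((-1/2 : ℝ) : ℂ) with hw
    set v : ℕ → ℂ := fun n => ((-1/2 + 1/((n:ℝ)+2) : ℝ) : ℂ) with hvdef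
    have hDv : ∀ n, D (v n) := by
      intro n
      have hp : (0:ℝ) < (n:ℝ) + 2 := by positivity
      have hpos : (0:ℝ) < 1/((n:ℝ)+2) := by positivity
      have hle : (1:ℝ)/((n:ℝ)+2) ≤ 1/2 := by
        rw [div_le_div_iff₀ hp (by norm_num)]
        have : (0:ℝ) ≤ (n:ℝ) := Nat.cast_nonneg n
        linarith
      apply hDreal
      · intro h; linarith [h]
      · intro h; linarith [h]
      · intro h; linarith [h]
    -- v tends to w
    have hv : Tendsto v atTop (𝓝 w) := by
      have hA : Tendsto (fun n : ℕ => ((n:ℝ)+2)) atTop atTop :=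
        tendsto_atTop_add_const_right atTop 2 tendsto_natCast_atTop_atTop
      have h0 : Tendsto (fun n : ℕ => 1/((n:ℝ)+2)) atTop (𝓝 0) := by
        simpa [one_div, Pi.inv_def] using hA.inv_tendsto_atTop
      have hre : Tendsto (fun n : ℕ => (-1/2 + 1/((n:ℝ)+2) : ℝ)) atTop (𝓝 (-1/2 : ℝ)) := by
        simpa using (tendsto_const_nhds.add h0 :
          Tendsto (fun n : ℕ => (-1/2 : ℝ) + 1/((n:ℝ)+2)) atTop (𝓝 ((-1/2 : ℝ) + 0)))
      exact (Complex.continuous_ofReal.tendsto _).comp hre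
    -- nonvanishing at the limit point
    have hN1w : ((w - ζ * (-1 - w)) * (ζ * w - (-1 - w))) ≠ 0 :=
      mul_ne_zero (n1a (-1/2)) (n1b (-1/2))
    have hden2 : ((-1 - w) - 1) * (ζ * (-1 - w) - ζ * 1) ≠ 0 := by
      have a : (-1 - w) - 1 = ((-(3:ℝ)/2 : ℝ) : ℂ) := by rw [hw]; push_cast; ring
      have b : ζ * (-1 - w) - ζ * 1 = ζ * ((-(3:ℝ)/2 : ℝ) : ℂ) := by rw [hw]; push_cast; ring
      rw [a, b]
      norm_num [hζ0]
    have hden3 : ((1:ℂ) - w) * (ζ * 1 - ζ * w) ≠ 0 := by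
      have a : (1:ℂ) - w = (((3:ℝ)/2 : ℝ) : ℂ) := by rw [hw]; push_cast; ring
      have b : ζ * 1 - ζ * w = ζ * (((3:ℝ)/2 : ℝ) : ℂ) := by rw [hw]; push_cast; ring
      rw [a, b]
      norm_num [hζ0]
    have hR2w : R₂ w ≠ 0 := by
      rw [hR₂, crossRatio]
      exact div_ne_zero (mul_ne_zero (n2a (-1/2)) (n2b (-1/2))) hden2
    have hR3w : R₃ w ≠ 0 := by
      rw [hR₃, crossRatio]
      exact div_ne_zero (mul_ne_zero (n3a (-1/2)) (n3b (-1/2))) hden3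
    -- continuity of R₂, R₃ at w
    have hR₂fun : R₂ = fun x : ℂ =>
        (((-1 - x) - ζ * 1) * (ζ * (-1 - x) - 1)) / (((-1 - x) - 1) * (ζ * (-1 - x) - ζ * 1)) :=
      funext fun x => by rw [hR₂, crossRatio]
    have hR₃fun : R₃ = fun x : ℂ =>
        (((1:ℂ) - ζ * x) * (ζ * 1 - x)) / (((1:ℂ) - x) * (ζ * 1 - ζ * x)) :=
      funext fun x => by rw [hR₃, crossRatio]
    have hR2cont : Tendsto (fun n => R₂ (v n)) atTop (𝓝 (R₂ w)) := by
      have hca : ContinuousAt R₂ w := by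
        rw [hR₂fun]
        exact ContinuousAt.div (by fun_prop) (by fun_prop) hden2
      exact hca.tendsto.comp hv
    have hR3cont : Tendsto (fun n => R₃ (v n)) atTop (𝓝 (R₃ w)) := by
      have hca : ContinuousAt R₃ w := by
        rw [hR₃fun]
        exact ContinuousAt.div (by fun_prop) (by fun_prop) hden3
      exact hca.tendsto.comp hv
    -- the equation forced by constancy
    have hEq : ∀ n, R₁ (v n) ^ b₁ = c' * R₂ (v n) ^ (-b₂) * R₃ (v n) ^ (-b₃) := by
      intro n
      obtain ⟨-, -, -, -, hr2, hr3⟩ := (hD (v n)).mp (hDv n)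
      have h := hcc (v n) (hDv n)
      have h2 : R₂ (v n) ^ b₂ ≠ 0 := zpow_ne_zero _ hr2
      have h3 : R₃ (v n) ^ b₃ ≠ 0 := zpow_ne_zero _ hr3
      rw [zpow_neg, zpow_neg, ← h]
      field_simp
    -- limit of the right-hand side
    have hRHS : Tendsto (fun n => c' * R₂ (v n) ^ (-b₂) * R₃ (v n) ^ (-b₃)) atTop
        (𝓝 (c' * R₂ w ^ (-b₂) * R₃ w ^ (-b₃))) :=
      (tendsto_const_nhds.mul (hR2cont.zpow₀ (-b₂) (Or.inl hR2w))).mul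
        (hR3cont.zpow₀ (-b₃) (Or.inl hR3w))
    have hLHS : Tendsto (fun n => R₁ (v n) ^ b₁) atTop
        (𝓝 (c' * R₂ w ^ (-b₂) * R₃ w ^ (-b₃))) :=
      hRHS.congr fun n => (hEq n).symm
    have hnorm : Tendsto (fun n => ‖R₁ (v n) ^ b₁‖) atTop
        (𝓝 ‖c' * R₂ w ^ (-b₂) * R₃ w ^ (-b₃)‖) := hLHS.norm
    -- blow-up of R₁ along v
    have hR1inv : ∀ x : ℂ, (R₁ x)⁻¹ =
        ((x - (-1 - x)) * (ζ * x - ζ * (-1 - x))) / ((x - ζ * (-1 - x)) * (ζ * x - (-1 - x))) := by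
      intro x
      rw [hR₁, crossRatio, inv_div]
    have hct : Tendsto (fun x : ℂ =>
        ((x - (-1 - x)) * (ζ * x - ζ * (-1 - x))) / ((x - ζ * (-1 - x)) * (ζ * x - (-1 - x))))
        (𝓝 w) (𝓝 0) := by
      have hca : ContinuousAt (fun x : ℂ =>
          ((x - (-1 - x)) * (ζ * x - ζ * (-1 - x))) / ((x - ζ * (-1 - x)) * (ζ * x - (-1 - x)))) w :=
        ContinuousAt.div (by fun_prop) (by fun_prop) hN1w
      have hval : w - (-1 - w) = 0 := by rw [hw]; push_cast; ring
      have := hca.tendsto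
      simpa [hval] using this
    have hinv : Tendsto (fun n => (R₁ (v n))⁻¹) atTop (𝓝 0) := by
      have := hct.comp hv
      exact this.congr fun n => (hR1inv (v n)).symm
    have hR1ne : ∀ n, R₁ (v n) ≠ 0 := fun n => ((hD (v n)).mp (hDv n)).2.2.2.1
    have hninv : Tendsto (fun n => ‖(R₁ (v n))⁻¹‖) atTop (𝓝[>] (0:ℝ)) := by
      refine tendsto_nhdsWithin_of_tendsto_nhds_of_eventually_within _
        (by simpa using hinv.norm) ?_
      filter_upwards with n
      exact Set.mem_Ioi.mpr (norm_pos_iff.mpr (inv_ne_zero (hR1ne n)))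
    have hatTop : Tendsto (fun n => ‖R₁ (v n)‖) atTop atTop := by
      have := hninv.inv_tendsto_nhdsGT_zero
      simpa [Pi.inv_def, norm_inv, inv_inv] using this
    have hpow : Tendsto (fun n => ‖R₁ (v n)‖ ^ b₁) atTop atTop :=
      (tendsto_zpow_atTop_atTop hb).comp hatTop
    exact not_tendsto_atTop_of_tendsto_nhds hnorm (by simpa [norm_zpow] using hpow)
  -- dispatch on the sign of a₁
  rcases ha₁.lt_or_gt with h | h
  · apply key (-a₁) (-a₂) (-a₃) (by omega) c⁻¹
    intro x hx
    obtain ⟨-, -, -, hr1, hr2, hr3⟩ := (hD x).mp hx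
    rw [zpow_neg, zpow_neg, zpow_neg, ← mul_inv, ← mul_inv, hc x hx]
  · exact key a₁ a₂ a₃ h c hc
end

section
/- Let F be a real quadratic or cubic (or any) number field of degree g, K its Galois closure, σ an element of Gal(K/ℚ), and define Q_σ : F → K by Q_σ(t) = t·σ^{-1}(t). With ε_σ = Σ_i r_i ⊗ σ(s_i) as above and the induced pairing ⟨x_1⊗x_2, y_1⊗y_2⟩ = Tr(x_1y_1)Tr(x_2y_2) on K⊗K, one has for all x ∈ K fixed by the group G_σ (with fixed field K_σ) and all t ∈ F: ⟨x·ε_σ, t⊗t⟩ = [K:K_σ]·Tr^{K_σ}_ℚ(x·Q_σ(t)). -/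
open Module

theorem aux_trace_tower (A B C : Type*) [Field A] [Field B] [Field C]
    [Algebra A B] [Algebra B C] [Algebra A C] [IsScalarTower A B C]
    [FiniteDimensional A C] (y : B) :
    Algebra.trace A C (algebraMap B C y)
      = (Module.finrank B C : A) • Algebra.trace A B y := by
  haveI : FiniteDimensional A B := FiniteDimensional.left A B C
  haveI : FiniteDimensional B C := FiniteDimensional.right A B C
  rw [← Algebra.trace_trace (S := B), Algebra.trace_algebraMap, map_nsmul,
    Nat.cast_smul_eq_nsmul A]

/-- Pairing formula for `ε_σ`: with trace-dual bases `(rᵢ), (sᵢ)` of a Galois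
number field `K`, `σ ∈ Gal(K/ℚ)`, a subfield `F ∋ t`, and a subfield `K_σ = E`
containing `x` and `Q_σ(t) = t·σ⁻¹(t)`, one has
`⟨x·ε_σ, t ⊗ t⟩ = [K:K_σ]·Tr^{K_σ}_ℚ(x·Q_σ(t))`, where the left side is
`Σᵢ Tr(x rᵢ t)·Tr(σ(sᵢ) t)`. -/
theorem epsilon_sigma_pairing_formula
    (K : Type*) [Field K] [Algebra ℚ K] [FiniteDimensional ℚ K] [IsGalois ℚ K]
    (g : ℕ) (hdeg : Module.finrank ℚ K = g)
    (b : Basis (Fin g) ℚ K) (s : Fin g → K)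
    (hdual : ∀ i j, Algebra.trace ℚ K (b i * s j) = if i = j then 1 else 0)
    (σ : K ≃ₐ[ℚ] K)
    (F E : IntermediateField ℚ K)
    (t : K) (ht : t ∈ F)
    (x : E) (q : E) (hq : (q : K) = t * σ.symm t) :
    ∑ i, (Algebra.trace ℚ K ((x : K) * b i * t)) *
        (Algebra.trace ℚ K (σ (s i) * t))
      = (Module.finrank E K : ℚ) * Algebra.trace ℚ E (x * q) := by
  have hnd := traceForm_nondegenerate ℚ K
  -- key: for every y, ∑ i, Tr(y * b i) • s i = y
  have key : ∀ y : K, ∑ i, Algebra.trace ℚ K (y * b i) • s i = y := by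
    intro y
    rw [← sub_eq_zero]
    apply hnd.1
    intro w
    have hb : ∀ j, Algebra.traceForm ℚ K
        ((∑ i, Algebra.trace ℚ K (y * b i) • s i) - y) (b j) = 0 := by
      intro j
      simp only [map_sub, map_sum, map_smul, LinearMap.sub_apply, LinearMap.sum_apply,
        LinearMap.smul_apply, Algebra.traceForm_apply, smul_eq_mul]
      rw [sub_eq_zero, Finset.sum_eq_single j]
      · rw [mul_comm (s j) (b j), hdual j j]; simp
      · intro i _ hij
        rw [mul_comm (s i) (b j), hdual j i, if_neg (Ne.symm hij), mul_zero]
      · simp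
    have : Algebra.traceForm ℚ K
        ((∑ i, Algebra.trace ℚ K (y * b i) • s i) - y) = 0 := by
      apply b.ext
      intro j
      simpa using hb j
    rw [this]; rfl
  -- rewrite LHS as Tr(σ(x t) * t)
  have lhs_eq : ∑ i, (Algebra.trace ℚ K ((x : K) * b i * t)) *
      (Algebra.trace ℚ K (σ (s i) * t))
      = Algebra.trace ℚ K (σ ((x : K) * t) * t) := by
    have : σ ((x : K) * t) = ∑ i, Algebra.trace ℚ K (((x : K) * t) * b i) • σ (s i) := by
      simp only [← map_smul σ, ← map_sum]
      rw [key ((x : K) * t)]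
    rw [this, Finset.sum_mul, map_sum]
    apply Finset.sum_congr rfl
    intro i _
    rw [smul_mul_assoc, map_smul, smul_eq_mul]
    congr 2
    ring
  rw [lhs_eq]
  -- trace invariance under σ.symm
  have inv_eq : Algebra.trace ℚ K (σ ((x : K) * t) * t)
      = Algebra.trace ℚ K ((x : K) * (q : K)) := by
    rw [← Algebra.trace_eq_of_algEquiv σ.symm (σ ((x : K) * t) * t)]
    congr 1
    rw [hq]
    simp only [map_mul, AlgEquiv.symm_apply_apply]
    ring
  rw [inv_eq]
  -- trace tower
  have hxq : ((x * q : E) : K) = (x : K) * (q : K) := rfl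
  rw [← hxq, ← IntermediateField.algebraMap_apply, aux_trace_tower ℚ E K (x*q), smul_eq_mul]
end
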